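/- arXiv:1505.00865 — 7 statements merged into one kernel-verified Lean document; each statement's English description precedes it below -/
import Mathlib

section
/- Let T > 0 and let f : (0,T) → ℝ be measurable. Define F(t) = ∫₀ᵗ f(τ)/τ dτ for 0 < t < T. Then (∫₀ᵀ |ln(t/(e·T))| · |F(t)|² dt/t)^{1/2} ≤ C · ∫₀ᵀ |ln(t/(e·T))| · |f(t)| dt/t for an absolute constant C. -/
open MeasureTheory Set
open scoped ENNReal NNReal

lemma cs_lintegral {α : Type*} [MeasurableSpace α] (μ : Measure α) {a b : α → ℝ≥0∞}
    (ha : Measurable a) (hb : Measurable b) :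
    (∫⁻ x, (a x * b x) ^ ((1:ℝ)/2) ∂μ) ^ 2 ≤ (∫⁻ x, a x ∂μ) * (∫⁻ x, b x ∂μ) := by
  have hpq : Real.HolderConjugate 2 2 := Real.HolderConjugate.two_two
  have h := ENNReal.lintegral_mul_le_Lp_mul_Lq μ hpq
    (ha.pow_const ((1:ℝ)/2)).aemeasurable (hb.pow_const ((1:ℝ)/2)).aemeasurable
  have h1 : ∀ x, ((fun x => a x ^ ((1:ℝ)/2)) * fun x => b x ^ ((1:ℝ)/2)) x
      = (a x * b x) ^ ((1:ℝ)/2) := by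
    intro x
    simp only [Pi.mul_apply]
    exact (ENNReal.mul_rpow_of_nonneg _ _ (by norm_num : (0:ℝ) ≤ 1/2)).symm
  have h2 : ∀ (c : α → ℝ≥0∞) (x : α), (c x ^ ((1:ℝ)/2)) ^ (2:ℝ) = c x := by
    intro c x
    rw [← ENNReal.rpow_mul]
    norm_num
  simp only [h1, h2] at h
  calc (∫⁻ x, (a x * b x) ^ ((1:ℝ)/2) ∂μ) ^ 2
      ≤ ((∫⁻ x, a x ∂μ) ^ ((1:ℝ)/2) * (∫⁻ x, b x ∂μ) ^ ((1:ℝ)/2)) ^ 2 :=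
        pow_le_pow_left' h 2
    _ = (∫⁻ x, a x ∂μ) * (∫⁻ x, b x ∂μ) := by
        rw [mul_pow, ← ENNReal.rpow_natCast (_ ^ _), ← ENNReal.rpow_natCast (_ ^ _),
          ← ENNReal.rpow_mul, ← ENNReal.rpow_mul]
        norm_num

lemma aux_hardy (T : ℝ) (hT : 0 < T) (f : ℝ → ℝ) (hf : Measurable f)
    (w : ℝ → ℝ) (hw_meas : Measurable w)
    (hwf : ∀ t : ℝ, 0 < t → t ≤ T → w t = 1 + Real.log T - Real.log t)
    (hw1 : ∀ t : ℝ, 0 < t → t ≤ T → 1 ≤ w t)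
    (F : ℝ → ℝ) (hF : ∀ t, F t = ∫ τ in Ioo 0 t, f τ / τ)
    (hInt : IntegrableOn (fun t => w t * |f t| / t) (Ioo 0 T)) :
    (∫ t in Ioo 0 T, w t * |F t| ^ 2 / t) ^ ((1:ℝ)/2)
      ≤ ∫ t in Ioo 0 T, w t * |f t| / t := by
  set A := ∫ t in Ioo 0 T, w t * |f t| / t with hA_def
  have hnn : 0 ≤ᵐ[volume.restrict (Ioo 0 T)] fun t => w t * |f t| / t := by
    refine (ae_restrict_iff' measurableSet_Ioo).2 (Filter.Eventually.of_forall fun t ht => ?_)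
    have h1 := hw1 t ht.1 ht.2.le
    have := abs_nonneg (f t)
    have := ht.1
    positivity
  have hA0 : 0 ≤ A := integral_nonneg_of_ae hnn
  set g : ℝ → ℝ≥0∞ := fun τ => ENNReal.ofReal (w τ * |f τ| / τ) with hg_def
  set b : ℝ → ℝ≥0∞ := fun τ => ENNReal.ofReal (|f τ| / (τ * w τ)) with hb_def
  have hg_meas : Measurable g :=
    ENNReal.measurable_ofReal.comp ((hw_meas.mul hf.abs).div measurable_id)
  have hb_meas : Measurable b :=
    ENNReal.measurable_ofReal.comp (hf.abs.div (measurable_id.mul hw_meas))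
  have hAlin : ∫⁻ τ in Ioo 0 T, g τ = ENNReal.ofReal A :=
    (MeasureTheory.ofReal_integral_eq_lintegral_ofReal hInt hnn).symm
  set B : ℝ → ℝ≥0∞ := fun t => ∫⁻ τ in Ioo 0 t, b τ with hB_def
  -- pointwise Cauchy-Schwarz bound on F
  have hFb : ∀ t ∈ Ioo (0:ℝ) T,
      (ENNReal.ofReal |F t|) ^ 2 ≤ ENNReal.ofReal A * B t := by
    intro t ht
    have h1 : ENNReal.ofReal |F t| ≤ ∫⁻ τ in Ioo 0 t, ENNReal.ofReal (|f τ| / τ) := by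
      calc ENNReal.ofReal |F t| = (‖F t‖₊ : ℝ≥0∞) := (Real.enorm_eq_ofReal_abs _).symm
        _ ≤ ∫⁻ τ in Ioo 0 t, (‖f τ / τ‖₊ : ℝ≥0∞) := by
            rw [hF t]; exact enorm_integral_le_lintegral_enorm _
        _ = ∫⁻ τ in Ioo 0 t, ENNReal.ofReal (|f τ| / τ) := by
            refine setLIntegral_congr_fun measurableSet_Ioo
              (fun τ hτ => ?_)
            rw [← enorm_eq_nnnorm, Real.enorm_eq_ofReal_abs, abs_div, abs_of_pos hτ.1]
    have h2 : ∀ τ ∈ Ioo (0:ℝ) t, ENNReal.ofReal (|f τ| / τ) = (g τ * b τ) ^ ((1:ℝ)/2) := by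
      intro τ hτ
      have hτ0 := hτ.1
      have hwτ : 1 ≤ w τ := hw1 τ hτ0 (hτ.2.trans ht.2).le
      have hw0 : 0 < w τ := lt_of_lt_of_le one_pos hwτ
      have hgb : g τ * b τ = ENNReal.ofReal ((|f τ| / τ) ^ 2) := by
        rw [hg_def, hb_def, ← ENNReal.ofReal_mul (by positivity)]
        congr 1
        field_simp
      rw [hgb, ENNReal.ofReal_pow (by positivity), ← ENNReal.rpow_natCast,
        ← ENNReal.rpow_mul]
      norm_num
    calc (ENNReal.ofReal |F t|) ^ 2
        ≤ (∫⁻ τ in Ioo 0 t, (g τ * b τ) ^ ((1:ℝ)/2)) ^ 2 := by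
          refine pow_le_pow_left' (h1.trans_eq ?_) 2
          exact setLIntegral_congr_fun measurableSet_Ioo h2
      _ ≤ (∫⁻ τ in Ioo 0 t, g τ) * (∫⁻ τ in Ioo 0 t, b τ) := cs_lintegral _ hg_meas hb_meas
      _ ≤ ENNReal.ofReal A * B t := by
          refine mul_le_mul_left ?_ _
          rw [← hAlin]
          exact lintegral_mono_set (Ioo_subset_Ioo le_rfl ht.2.le)
  -- the inner integral bound
  have hKint : ∀ τ ∈ Ioo (0:ℝ) T,
      ∫⁻ t in Ioo τ T, ENNReal.ofReal (w t / t) ≤ ENNReal.ofReal (w τ ^ 2 / 2) := by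
    intro τ hτ
    obtain ⟨hτ0, hτT⟩ := hτ
    have hlog : ContinuousOn (fun t : ℝ => (1 + Real.log T - Real.log t) / t) (Icc τ T) := by
      refine ContinuousOn.div (continuousOn_const.sub ?_) continuousOn_id fun x hx =>
        (hτ0.trans_le hx.1).ne'
      exact Real.continuousOn_log.mono fun x hx => (hτ0.trans_le hx.1).ne'
    have hint : IntegrableOn (fun t : ℝ => (1 + Real.log T - Real.log t) / t) (Ioo τ T) :=
      (hlog.integrableOn_Icc).mono_set Ioo_subset_Icc_self
    have hnn2 : 0 ≤ᵐ[volume.restrict (Ioo τ T)]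
        fun t : ℝ => (1 + Real.log T - Real.log t) / t := by
      refine (ae_restrict_iff' measurableSet_Ioo).2 (Filter.Eventually.of_forall fun t ht => ?_)
      have ht0 : 0 < t := hτ0.trans ht.1
      have hl : Real.log t ≤ Real.log T := Real.log_le_log ht0 ht.2.le
      have h1 : 0 ≤ 1 + Real.log T - Real.log t := by linarith
      positivity
    have hcongr : ∫⁻ t in Ioo τ T, ENNReal.ofReal (w t / t)
        = ∫⁻ t in Ioo τ T, ENNReal.ofReal ((1 + Real.log T - Real.log t) / t) := by
      refine setLIntegral_congr_fun measurableSet_Ioo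
        (fun t ht => ?_)
      rw [hwf t (hτ0.trans ht.1) ht.2.le]
    rw [hcongr, ← MeasureTheory.ofReal_integral_eq_lintegral_ofReal hint hnn2]
    apply ENNReal.ofReal_le_ofReal
    rw [← integral_Ioc_eq_integral_Ioo, ← intervalIntegral.integral_of_le hτT.le]
    have hderiv : ∀ x ∈ uIcc τ T,
        HasDerivAt (fun t : ℝ => -(1 + Real.log T - Real.log t) ^ 2 / 2)
          ((1 + Real.log T - Real.log x) / x) x := by
      intro x hx
      rw [uIcc_of_le hτT.le] at hx
      have hx0 : 0 < x := hτ0.trans_le hx.1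
      have h1 : HasDerivAt (fun t : ℝ => 1 + Real.log T - Real.log t) (-x⁻¹) x :=
        (Real.hasDerivAt_log hx0.ne').const_sub (1 + Real.log T)
      have h2 := ((h1.pow 2).neg).div_const 2
      refine h2.congr_deriv ?_
      rw [show (2:ℕ) - 1 = 1 from rfl]
      field_simp
      push_cast
      ring
    have hii : IntervalIntegrable (fun t : ℝ => (1 + Real.log T - Real.log t) / t)
        volume τ T := by
      apply ContinuousOn.intervalIntegrable
      rwa [uIcc_of_le hτT.le]
    rw [intervalIntegral.integral_eq_sub_of_hasDerivAt hderiv hii]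
    rw [hwf τ hτ0 hτT.le]
    have : Real.log T ≤ Real.log T := le_rfl
    nlinarith [sq_nonneg (1 + Real.log T - Real.log τ)]
  -- main chain
  have step1 : ∫⁻ t in Ioo 0 T, ENNReal.ofReal (w t * |F t| ^ 2 / t)
      ≤ ∫⁻ t in Ioo 0 T, ENNReal.ofReal A * (ENNReal.ofReal (w t / t) * B t) := by
    refine lintegral_mono_ae ((ae_restrict_iff' measurableSet_Ioo).2
      (Filter.Eventually.of_forall fun t ht => ?_))
    have hrw : w t * |F t| ^ 2 / t = (w t / t) * |F t| ^ 2 := by ring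
    rw [hrw, ENNReal.ofReal_mul (div_nonneg ((hw1 t ht.1 ht.2.le).trans' zero_le_one) ht.1.le),
      ENNReal.ofReal_pow (abs_nonneg _)]
    calc ENNReal.ofReal (w t / t) * ENNReal.ofReal |F t| ^ 2
        ≤ ENNReal.ofReal (w t / t) * (ENNReal.ofReal A * B t) :=
          mul_le_mul_right (hFb t ht) _
      _ = ENNReal.ofReal A * (ENNReal.ofReal (w t / t) * B t) := by ring
  have step2 : ∫⁻ t in Ioo 0 T, ENNReal.ofReal A * (ENNReal.ofReal (w t / t) * B t)
      = ENNReal.ofReal A * ∫⁻ t in Ioo 0 T, ENNReal.ofReal (w t / t) * B t :=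
    lintegral_const_mul' _ _ ENNReal.ofReal_ne_top
  -- Fubini
  set Kp : ℝ × ℝ → ℝ≥0∞ := fun p =>
    {q : ℝ × ℝ | q.2 ∈ Ioo 0 q.1}.indicator
      (fun q => ENNReal.ofReal (w q.1 / q.1) * b q.2) p with hKp_def
  have hset : MeasurableSet {q : ℝ × ℝ | q.2 ∈ Ioo 0 q.1} := by
    have : {q : ℝ × ℝ | q.2 ∈ Ioo 0 q.1}
        = {q : ℝ × ℝ | (0:ℝ) < q.2} ∩ {q : ℝ × ℝ | q.2 < q.1} := by
      ext q; simp [mem_Ioo]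
    rw [this]
    exact (measurableSet_lt measurable_const measurable_snd).inter
      (measurableSet_lt measurable_snd measurable_fst)
  have hKp_meas : Measurable Kp := by
    refine Measurable.indicator ?_ hset
    exact (ENNReal.measurable_ofReal.comp
      ((hw_meas.comp measurable_fst).div measurable_fst)).mul (hb_meas.comp measurable_snd)
  have hBsub : ∀ t ∈ Ioo (0:ℝ) T,
      ENNReal.ofReal (w t / t) * B t = ∫⁻ τ in Ioo 0 T, Kp (t, τ) := by
    intro t ht
    have heq : ∀ τ : ℝ, Kp (t, τ)
        = (Ioo (0:ℝ) t).indicator (fun τ => ENNReal.ofReal (w t / t) * b τ) τ := by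
      intro τ
      rfl
    simp_rw [heq]
    rw [lintegral_indicator measurableSet_Ioo, Measure.restrict_restrict measurableSet_Ioo,
      inter_eq_left.2 (Ioo_subset_Ioo le_rfl ht.2.le),
      lintegral_const_mul' _ _ ENNReal.ofReal_ne_top]
  have swap : ∫⁻ t in Ioo 0 T, ∫⁻ τ in Ioo 0 T, Kp (t, τ)
      = ∫⁻ τ in Ioo 0 T, ∫⁻ t in Ioo 0 T, Kp (t, τ) :=
    lintegral_lintegral_swap hKp_meas.aemeasurable
  have inner : ∀ τ ∈ Ioo (0:ℝ) T,
      ∫⁻ t in Ioo 0 T, Kp (t, τ) ≤ b τ * ENNReal.ofReal (w τ ^ 2 / 2) := by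
    intro τ hτ
    have h1 : ∀ t : ℝ, Kp (t, τ)
        = (Ioi τ).indicator (fun t => ENNReal.ofReal (w t / t) * b τ) t := by
      intro t
      simp only [hKp_def, Set.indicator, mem_setOf_eq, mem_Ioo, mem_Ioi]
      by_cases h : τ < t
      · simp [h, hτ.1]
      · simp [h]
    calc ∫⁻ t in Ioo 0 T, Kp (t, τ)
        = ∫⁻ t in Ioo 0 T, (Ioi τ).indicator (fun t => ENNReal.ofReal (w t / t) * b τ) t := by
          simp_rw [h1]
      _ = ∫⁻ t in Ioo τ T, ENNReal.ofReal (w t / t) * b τ := by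
          rw [lintegral_indicator measurableSet_Ioi,
            Measure.restrict_restrict measurableSet_Ioi, Ioi_inter_Ioo,
            max_eq_left hτ.1.le]
      _ = (∫⁻ t in Ioo τ T, ENNReal.ofReal (w t / t)) * b τ :=
          lintegral_mul_const' _ _ ENNReal.ofReal_ne_top
      _ ≤ b τ * ENNReal.ofReal (w τ ^ 2 / 2) := by
          rw [mul_comm]
          exact mul_le_mul_right (hKint τ hτ) _
  have final : ∫⁻ τ in Ioo 0 T, b τ * ENNReal.ofReal (w τ ^ 2 / 2) ≤ ENNReal.ofReal A := by
    rw [← hAlin]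
    refine lintegral_mono_ae ((ae_restrict_iff' measurableSet_Ioo).2
      (Filter.Eventually.of_forall fun τ hτ => ?_))
    have hwτ : 1 ≤ w τ := hw1 τ hτ.1 hτ.2.le
    have hw0 : 0 < w τ := lt_of_lt_of_le one_pos hwτ
    have hτ0 : 0 < τ := hτ.1
    rw [hb_def, hg_def, ← ENNReal.ofReal_mul (by positivity)]
    apply ENNReal.ofReal_le_ofReal
    have hkey : |f τ| / (τ * w τ) * (w τ ^ 2 / 2) = w τ * |f τ| / τ / 2 := by
      field_simp
    rw [hkey]
    have hpos : 0 ≤ w τ * |f τ| / τ := by positivity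
    linarith
  have hmid : ∫⁻ t in Ioo 0 T, ENNReal.ofReal (w t / t) * B t ≤ ENNReal.ofReal A := by
    calc ∫⁻ t in Ioo 0 T, ENNReal.ofReal (w t / t) * B t
        = ∫⁻ t in Ioo 0 T, ∫⁻ τ in Ioo 0 T, Kp (t, τ) :=
          setLIntegral_congr_fun measurableSet_Ioo hBsub
      _ = ∫⁻ τ in Ioo 0 T, ∫⁻ t in Ioo 0 T, Kp (t, τ) := swap
      _ ≤ ∫⁻ τ in Ioo 0 T, b τ * ENNReal.ofReal (w τ ^ 2 / 2) :=
          lintegral_mono_ae ((ae_restrict_iff' measurableSet_Ioo).2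
            (Filter.Eventually.of_forall inner))
      _ ≤ ENNReal.ofReal A := final
  have hmain : ∫⁻ t in Ioo 0 T, ENNReal.ofReal (w t * |F t| ^ 2 / t)
      ≤ ENNReal.ofReal A * ENNReal.ofReal A :=
    step1.trans (step2.trans_le (mul_le_mul_right hmid _))
  -- conclude
  by_cases hLI : IntegrableOn (fun t => w t * |F t| ^ 2 / t) (Ioo 0 T)
  · have hnnL : 0 ≤ᵐ[volume.restrict (Ioo 0 T)] fun t => w t * |F t| ^ 2 / t := by
      refine (ae_restrict_iff' measurableSet_Ioo).2
        (Filter.Eventually.of_forall fun t ht => ?_)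
      have h1 := hw1 t ht.1 ht.2.le
      have h2 := ht.1
      positivity
    have hI0 : 0 ≤ ∫ t in Ioo 0 T, w t * |F t| ^ 2 / t := integral_nonneg_of_ae hnnL
    have heq : ENNReal.ofReal (∫ t in Ioo 0 T, w t * |F t| ^ 2 / t)
        = ∫⁻ t in Ioo 0 T, ENNReal.ofReal (w t * |F t| ^ 2 / t) :=
      MeasureTheory.ofReal_integral_eq_lintegral_ofReal hLI hnnL
    have hle : (∫ t in Ioo 0 T, w t * |F t| ^ 2 / t) ≤ A * A := by
      rw [← ENNReal.ofReal_le_ofReal_iff (by positivity), heq, ENNReal.ofReal_mul hA0]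
      exact hmain
    rw [← Real.sqrt_eq_rpow]
    calc Real.sqrt (∫ t in Ioo 0 T, w t * |F t| ^ 2 / t)
        ≤ Real.sqrt (A * A) := Real.sqrt_le_sqrt hle
      _ = A := Real.sqrt_mul_self hA0
  · rw [integral_undef hLI]
    rw [Real.zero_rpow (by norm_num : (1:ℝ)/2 ≠ 0)]
    exact hA0

theorem stmt_0 :
    ∃ C : ℝ, 0 < C ∧ ∀ (T : ℝ), 0 < T → ∀ f : ℝ → ℝ, Measurable f →
      IntegrableOn (fun t => |Real.log (t / (Real.exp 1 * T))| * |f t| / t) (Ioo 0 T) →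
      (∫ t in Ioo 0 T,
          |Real.log (t / (Real.exp 1 * T))| * |∫ τ in Ioo 0 t, f τ / τ| ^ 2 / t) ^ ((1 : ℝ) / 2)
        ≤ C * ∫ t in Ioo 0 T, |Real.log (t / (Real.exp 1 * T))| * |f t| / t := by
  refine ⟨1, one_pos, ?_⟩
  intro T hT f hf hInt
  rw [one_mul]
  have hwf : ∀ t : ℝ, 0 < t → t ≤ T →
      |Real.log (t / (Real.exp 1 * T))| = 1 + Real.log T - Real.log t := by
    intro t ht0 htT
    have hlog : Real.log (t / (Real.exp 1 * T)) = Real.log t - (1 + Real.log T) := by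
      rw [Real.log_div ht0.ne' (by positivity), Real.log_mul (Real.exp_ne_zero 1) hT.ne',
        Real.log_exp]
    have h2 : Real.log t ≤ Real.log T := Real.log_le_log ht0 htT
    rw [hlog, abs_of_nonpos (by linarith)]
    ring
  have hw1 : ∀ t : ℝ, 0 < t → t ≤ T → 1 ≤ |Real.log (t / (Real.exp 1 * T))| := by
    intro t ht0 htT
    rw [hwf t ht0 htT]
    have h2 : Real.log t ≤ Real.log T := Real.log_le_log ht0 htT
    linarith
  exact aux_hardy T hT f hf _
    ((Real.measurable_log.comp (measurable_id.div_const _)).abs) hwf hw1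
    (fun t => ∫ τ in Ioo 0 t, f τ / τ) (fun t => rfl) hInt
end

section
/- Let T > 0 and let f : (0,T) → ℝ be measurable. Define F(t) = ∫₀ᵗ f(τ)/τ dτ for 0 < t < T. Then sup_{0<t<T} |ln(t/(e·T))| · |F(t)| ≤ C · sup_{0<t<T} |ln(t/(e·T))|² · |f(t)| for an absolute constant C. -/
open MeasureTheory Set Filter Real

lemma psi_key {c t : ℝ} (ht : 0 < t) (htc : t < c) :
    IntegrableOn (fun τ => 1 / (τ * (Real.log (τ / c)) ^ 2)) (Ioo 0 t) ∧
    ∫ τ in Ioo 0 t, 1 / (τ * (Real.log (τ / c)) ^ 2) = -1 / Real.log (t / c) := by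
  have hc0 : 0 < c := ht.trans htc
  set b := Real.log (c / t) with hb
  have hb0 : 0 < b := Real.log_pos (by rw [lt_div_iff₀ ht]; linarith)
  set g : ℝ → ℝ := fun x => c * Real.exp (-x) with hg
  have hg' : ∀ x ∈ Ioi b, HasDerivWithinAt g (-(c * Real.exp (-x))) (Ioi b) x := by
    intro x _
    have : HasDerivAt g (c * (Real.exp (-x) * (-1))) x :=
      ((Real.hasDerivAt_exp (-x)).comp x (hasDerivAt_neg x)).const_mul c
    simpa [mul_comm, mul_assoc, mul_neg] using this.hasDerivWithinAt
  have hinj : InjOn g (Ioi b) := by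
    intro x _ y _ hxy
    have := Real.exp_injective (mul_left_cancel₀ hc0.ne' hxy)
    exact neg_injective this
  have himg : g '' Ioi b = Ioo 0 t := by
    ext y
    constructor
    · rintro ⟨x, hx, rfl⟩
      have hx' : Real.exp (-x) < Real.exp (-b) := Real.exp_lt_exp.2 (by simpa using hx)
      have hebt : Real.exp (-b) = t / c := by
        rw [hb, ← Real.log_inv, Real.exp_log (by positivity), inv_div]
      refine ⟨by positivity, ?_⟩
      calc c * Real.exp (-x) < c * (t / c) := by
            rw [← hebt]; exact (mul_lt_mul_iff_right₀ hc0).2 hx'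
        _ = t := by field_simp
    · rintro ⟨hy0, hyt⟩
      refine ⟨Real.log (c / y), ?_, ?_⟩
      · exact Real.log_lt_log (by positivity) ((div_lt_div_iff_of_pos_left hc0 ht hy0).2 hyt)
      · show c * Real.exp (-Real.log (c / y)) = y
        rw [← Real.log_inv, Real.exp_log (by positivity), inv_div]
        field_simp
  have hcongr : ∀ x ∈ Ioi b,
      |(-(c * Real.exp (-x)))| • (1 / (g x * (Real.log (g x / c)) ^ 2)) = 1 / x ^ 2 := by
    intro x hx
    have hx0 : 0 < x := hb0.trans hx
    have hlog : Real.log (g x / c) = -x := by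
      rw [hg]
      simp only [mul_div_assoc, mul_div_cancel_left₀ _ hc0.ne', Real.log_exp]
    have hgx : 0 < c * Real.exp (-x) := by positivity
    rw [hlog, abs_neg, abs_of_pos hgx, smul_eq_mul, hg, neg_sq]
    have hex : Real.exp (-x) ≠ 0 := Real.exp_ne_zero _
    field_simp
  -- integral and integrability on Ioi b of 1/x^2
  have hderivF : ∀ x ∈ Ioi b, HasDerivAt (fun x : ℝ => -x⁻¹) (1 / x ^ 2) x := by
    intro x hx
    have hx0 : x ≠ 0 := (hb0.trans hx).ne'
    exact (hasDerivAt_inv hx0).neg.congr_deriv (by simp [one_div])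
  have hcont : ContinuousWithinAt (fun x : ℝ => -x⁻¹) (Ici b) b :=
    ((continuousAt_inv₀ hb0.ne').neg).continuousWithinAt
  have hFtend : Tendsto (fun x : ℝ => -x⁻¹) atTop (nhds 0) := by
    simpa using (tendsto_inv_atTop_zero (𝕜 := ℝ)).neg
  have hnonneg : ∀ x ∈ Ioi b, 0 ≤ 1 / x ^ 2 := fun x hx => by positivity
  have hIoiInt : IntegrableOn (fun x : ℝ => 1 / x ^ 2) (Ioi b) :=
    integrableOn_Ioi_deriv_of_nonneg hcont hderivF hnonneg hFtend
  have hIoiVal : ∫ x in Ioi b, 1 / x ^ 2 = b⁻¹ := by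
    rw [integral_Ioi_of_hasDerivAt_of_nonneg hcont hderivF hnonneg hFtend]
    simp
  have hiff := integrableOn_image_iff_integrableOn_abs_deriv_smul measurableSet_Ioi hg' hinj
      (fun τ => 1 / (τ * (Real.log (τ / c)) ^ 2))
  have hval := integral_image_eq_integral_abs_deriv_smul measurableSet_Ioi hg' hinj
      (fun τ => 1 / (τ * (Real.log (τ / c)) ^ 2))
  rw [himg] at hiff hval
  have hlogtc : Real.log (t / c) = -b := by
    rw [hb, ← Real.log_inv, inv_div]
  constructor
  · rw [hiff]
    exact hIoiInt.congr_fun (fun x hx => (hcongr x hx).symm) measurableSet_Ioi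
  · rw [hval, setIntegral_congr_fun measurableSet_Ioi hcongr, hIoiVal, hlogtc]
    rw [neg_div, div_neg, neg_neg, one_div]

lemma pointwise_bound {c T S : ℝ} (hTc : T < c) {f : ℝ → ℝ} (hf : Measurable f)
    (hS : 0 ≤ S) {t : ℝ} (ht : t ∈ Ioo 0 T)
    (hbound : ∀ᵐ τ ∂(volume.restrict (Ioo 0 t)), |Real.log (τ / c)| ^ 2 * |f τ| ≤ S) :
    |Real.log (t / c)| * |∫ τ in Ioo 0 t, f τ / τ| ≤ S := by
  have ht0 : 0 < t := ht.1
  have htc : t < c := ht.2.trans hTc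
  have hc0 : 0 < c := ht0.trans htc
  obtain ⟨hψint, hψval⟩ := psi_key ht0 htc
  set L := Real.log (t / c) with hL
  have hL0 : L < 0 := Real.log_neg (by positivity) (by rw [div_lt_one hc0]; exact htc)
  have hdom : ∀ᵐ τ ∂(volume.restrict (Ioo 0 t)),
      ‖f τ / τ‖ ≤ S * (1 / (τ * (Real.log (τ / c)) ^ 2)) := by
    filter_upwards [hbound, ae_restrict_mem measurableSet_Ioo] with τ hτ hτmem
    have hτ0 : 0 < τ := hτmem.1
    have hτc : τ < c := hτmem.2.trans htc
    have hlogτ : Real.log (τ / c) < 0 := Real.log_neg (div_pos hτ0 hc0) (by rw [div_lt_one hc0]; exact hτc)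
    have hlsq : 0 < (Real.log (τ / c)) ^ 2 := pow_two_pos_of_ne_zero hlogτ.ne
    rw [sq_abs] at hτ
    rw [Real.norm_eq_abs, abs_div, abs_of_pos hτ0]
    rw [mul_one_div, div_le_div_iff₀ hτ0 (mul_pos hτ0 hlsq)]
    nlinarith [abs_nonneg (f τ)]
  have hSψint : IntegrableOn (fun τ => S * (1 / (τ * (Real.log (τ / c)) ^ 2))) (Ioo 0 t) :=
    hψint.const_mul S
  have hint : IntegrableOn (fun τ => f τ / τ) (Ioo 0 t) :=
    Integrable.mono' hSψint ((hf.div measurable_id).aestronglyMeasurable) hdom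
  have h1 : |∫ τ in Ioo 0 t, f τ / τ| ≤ S * (-1 / L) := by
    calc |∫ τ in Ioo 0 t, f τ / τ| ≤ ∫ τ in Ioo 0 t, ‖f τ / τ‖ := by
          simpa [Real.norm_eq_abs] using
            norm_integral_le_integral_norm (μ := volume.restrict (Ioo 0 t)) (fun τ => f τ / τ)
      _ ≤ ∫ τ in Ioo 0 t, S * (1 / (τ * (Real.log (τ / c)) ^ 2)) :=
          integral_mono_ae hint.norm hSψint hdom
      _ = S * (-1 / L) := by rw [integral_const_mul, hψval]
  have habs : |L| = -L := abs_of_neg hL0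
  calc |L| * |∫ τ in Ioo 0 t, f τ / τ| ≤ |L| * (S * (-1 / L)) :=
        mul_le_mul_of_nonneg_left h1 (abs_nonneg _)
    _ = S := by rw [habs]; field_simp; exact mul_div_cancel_left₀ S hL0.ne

set_option maxHeartbeats 1600000 in
theorem stmt_1 :
    ∃ C : ℝ, 0 < C ∧ ∀ (T : ℝ), 0 < T → ∀ f : ℝ → ℝ, Measurable f →
      (∃ M : ℝ, ∀ᵐ t ∂(volume.restrict (Ioo 0 T)),
        |Real.log (t / (Real.exp 1 * T))| ^ 2 * |f t| ≤ M) →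
      essSup (fun t => |Real.log (t / (Real.exp 1 * T))| * |∫ τ in Ioo 0 t, f τ / τ|)
          (volume.restrict (Ioo 0 T))
        ≤ C * essSup (fun t => |Real.log (t / (Real.exp 1 * T))| ^ 2 * |f t|)
          (volume.restrict (Ioo 0 T)) := by
  refine ⟨1, one_pos, ?_⟩
  intro T hT f hf hMex
  obtain ⟨M, hM⟩ := hMex
  rw [one_mul]
  have he1 : (1 : ℝ) < Real.exp 1 := by
    have := Real.add_one_le_exp (1 : ℝ); linarith
  have hTc : T < Real.exp 1 * T := by nlinarith
  set c := Real.exp 1 * T with hcdef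
  set μ := volume.restrict (Ioo 0 T) with hμdef
  have hμne : μ ≠ 0 := by
    rw [hμdef, Ne, Measure.restrict_eq_zero, Real.volume_Ioo]
    simp [hT.le, hT.ne', ENNReal.ofReal_eq_zero, not_le, hT]
  haveI : (MeasureTheory.ae μ).NeBot := ae_neBot.mpr hμne
  set G : ℝ → ℝ := fun t => |Real.log (t / c)| ^ 2 * |f t| with hGdef
  set S := essSup G μ with hSdef
  have hgle : ∀ᵐ t ∂μ, G t ≤ S := ae_le_essSup ⟨M, hM⟩
  have hS0 : 0 ≤ S := by
    obtain ⟨t, ht⟩ := hgle.exists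
    exact le_trans (by positivity) ht
  have key : ∀ᵐ t ∂μ, |Real.log (t / c)| * |∫ τ in Ioo 0 t, f τ / τ| ≤ S := by
    rw [hμdef]
    filter_upwards [ae_restrict_mem measurableSet_Ioo] with t htmem
    refine pointwise_bound hTc hf hS0 htmem ?_
    have hsub : Ioo (0 : ℝ) t ⊆ Ioo 0 T := Ioo_subset_Ioo le_rfl htmem.2.le
    exact ae_restrict_of_ae_restrict_of_subset hsub (hμdef ▸ hgle)
  have hcb : Filter.IsCoboundedUnder (· ≤ ·) (MeasureTheory.ae μ)
      (fun t => |Real.log (t / c)| * |∫ τ in Ioo 0 t, f τ / τ|) :=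
    by
      refine ⟨0, fun a ha => ?_⟩
      rw [Filter.eventually_map] at ha
      obtain ⟨t, ht⟩ := ha.exists
      exact le_trans (by positivity) ht
  exact Filter.limsup_le_of_le hcb key
end

section
/- Let T > 0 and let f : (0,T) → ℝ be measurable. Define F(t) = ∫₀ᵗ |ln(τ/(e·T))|^{-1} f(τ)/τ dτ for 0 < t < T. Then ∫₀ᵀ |ln(t/(e·T))| · |F(t)| dt/t ≤ (1/2) · ∫₀ᵀ |ln(t/(e·T))| · |f(t)| dt/t. -/
open MeasureTheory Set
open scoped ENNReal

lemma wval {T t : ℝ} (hT : 0 < T) (ht : 0 < t) (htT : t ≤ T) :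
    |Real.log (t / (Real.exp 1 * T))| = 1 + Real.log T - Real.log t := by
  rw [Real.log_div (ne_of_gt ht) (by positivity),
    Real.log_mul (Real.exp_ne_zero 1) (ne_of_gt hT), Real.log_exp]
  have h1 : Real.log t ≤ Real.log T := Real.log_le_log ht htT
  rw [abs_of_nonpos (by linarith)]
  ring

lemma wone {T t : ℝ} (hT : 0 < T) (ht : 0 < t) (htT : t ≤ T) :
    1 ≤ |Real.log (t / (Real.exp 1 * T))| := by
  rw [wval hT ht htT]
  have h1 : Real.log t ≤ Real.log T := Real.log_le_log ht htT
  linarith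

lemma keyint {T τ : ℝ} (hT : 0 < T) (hτ : 0 < τ) (hτT : τ < T) :
    ∫ t in Set.Ioo τ T, |Real.log (t / (Real.exp 1 * T))| / t
      ≤ |Real.log (τ / (Real.exp 1 * T))| ^ 2 / 2 := by
  set a := Real.log T with ha
  set ψ : ℝ → ℝ := fun x => (1 + a - Real.log x) / x with hψ
  have hcont : ContinuousOn ψ (Set.Icc τ T) := by
    apply ContinuousOn.div
    · exact (continuousOn_const.sub (Real.continuousOn_log.mono (by
        intro x hx; exact ne_of_gt (lt_of_lt_of_le hτ hx.1))))
    · exact continuousOn_id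
    · intro x hx; exact ne_of_gt (lt_of_lt_of_le hτ hx.1)
  have hderiv : ∀ x ∈ Set.uIcc τ T, HasDerivAt
      (fun x => (1 + a) * Real.log x - (Real.log x) ^ 2 / 2) (ψ x) x := by
    intro x hx
    rw [Set.uIcc_of_le hτT.le] at hx
    have hx0 : x ≠ 0 := ne_of_gt (lt_of_lt_of_le hτ hx.1)
    have hl : HasDerivAt Real.log x⁻¹ x := Real.hasDerivAt_log hx0
    have h1 : HasDerivAt (fun x => (1 + a) * Real.log x) ((1 + a) * x⁻¹) x :=
      hl.const_mul _
    have h2 : HasDerivAt (fun x => (Real.log x) ^ 2 / 2)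
        ((2 : ℕ) * Real.log x ^ (2 - 1) * x⁻¹ / 2) x := (hl.pow 2).div_const 2
    have := h1.sub h2
    refine this.congr_deriv ?_
    have : (x : ℝ) ≠ 0 := hx0
    simp only [hψ]
    field_simp
    ring
  have hii : IntervalIntegrable ψ volume τ T := by
    apply ContinuousOn.intervalIntegrable
    rwa [Set.uIcc_of_le hτT.le]
  have hftc := intervalIntegral.integral_eq_sub_of_hasDerivAt hderiv hii
  have heq : ∫ t in Set.Ioo τ T, |Real.log (t / (Real.exp 1 * T))| / t
      = ∫ t in τ..T, ψ t := by
    rw [intervalIntegral.integral_of_le hτT.le, ← MeasureTheory.integral_Ioc_eq_integral_Ioo]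
    apply setIntegral_congr_fun measurableSet_Ioc
    intro x hx
    simp only []
    rw [wval hT (lt_of_lt_of_le hτ hx.1.le) hx.2]
  rw [heq, hftc, wval hT hτ hτT.le]
  have hb : Real.log τ ≤ a := Real.log_le_log hτ hτT.le
  set b := Real.log τ
  nlinarith [sq_nonneg (a - b)]

lemma wcont {T : ℝ} (hT : 0 < T) {τ : ℝ} (hτ : 0 < τ) :
    ContinuousOn (fun t => |Real.log (t / (Real.exp 1 * T))| / t) (Set.Icc τ T) := by
  apply ContinuousOn.div
  · apply ContinuousOn.abs
    apply Real.continuousOn_log.comp ((continuous_id.div_const _).continuousOn)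
    intro x hx
    have : 0 < x := lt_of_lt_of_le hτ hx.1
    have : 0 < x / (Real.exp 1 * T) := by positivity
    simpa using ne_of_gt this
  · exact continuousOn_id
  · intro x hx; exact ne_of_gt (lt_of_lt_of_le hτ hx.1)

theorem stmt_4 (T : ℝ) (hT : 0 < T) (f : ℝ → ℝ) (hf : Measurable f)
    (hint : IntegrableOn (fun t => |Real.log (t / (Real.exp 1 * T))| * |f t| / t) (Ioo 0 T)) :
    (∫ t in Ioo 0 T, |Real.log (t / (Real.exp 1 * T))| *
        |∫ τ in Ioo 0 t, |Real.log (τ / (Real.exp 1 * T))|⁻¹ * f τ / τ| / t)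
      ≤ (1 / 2) * ∫ t in Ioo 0 T, |Real.log (t / (Real.exp 1 * T))| * |f t| / t := by
  have hc0 : 0 < Real.exp 1 * T := by positivity
  set w : ℝ → ℝ := fun t => |Real.log (t / (Real.exp 1 * T))| with hw
  have hwmeas : Measurable w := (Real.measurable_log.comp (measurable_id.div_const _)).abs
  set φ : ℝ → ℝ := fun τ => (w τ)⁻¹ * f τ / τ with hφ
  have hφmeas : Measurable φ := (hwmeas.inv.mul hf).div measurable_id
  set g : ℝ → ℝ := fun τ => (w τ)⁻¹ * |f τ| / τ with hg
  have hgmeas : Measurable g := (hwmeas.inv.mul hf.abs).div measurable_id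
  set h : ℝ → ℝ := fun t => w t * |f t| / t with hh
  have hhmeas : Measurable h := (hwmeas.mul hf.abs).div measurable_id
  -- pointwise facts
  have habsφ : ∀ τ : ℝ, 0 < τ → |φ τ| = g τ := by
    intro τ hτ
    simp only [hφ, hg]
    rw [abs_div, abs_mul, abs_inv, abs_abs, abs_of_pos hτ]
  have hgh : ∀ τ ∈ Ioo (0:ℝ) T, g τ ≤ h τ := by
    intro τ hτ
    have h1 : 1 ≤ w τ := wone hT hτ.1 hτ.2.le
    have h2 : (w τ)⁻¹ ≤ w τ := le_trans (inv_le_one_of_one_le₀ h1) h1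
    have := abs_nonneg (f τ)
    simp only [hg, hh]
    gcongr
    exact hτ.1.le
  have hhnn : ∀ τ ∈ Ioo (0:ℝ) T, 0 ≤ h τ := by
    intro τ hτ
    exact div_nonneg (mul_nonneg (abs_nonneg _) (abs_nonneg _)) hτ.1.le
  have hgnn : ∀ τ ∈ Ioo (0:ℝ) T, 0 ≤ g τ := by
    intro τ hτ
    exact div_nonneg (mul_nonneg (inv_nonneg.2 (abs_nonneg _)) (abs_nonneg _)) hτ.1.le
  -- B and finiteness
  set B : ℝ≥0∞ := ∫⁻ t in Ioo 0 T, ENNReal.ofReal (h t) with hB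
  have hBeq : ENNReal.ofReal (∫ t in Ioo 0 T, h t) = B :=
    ofReal_integral_eq_lintegral_ofReal hint
      ((ae_restrict_mem measurableSet_Ioo).mono hhnn)
  have hBfin : B ≠ ⊤ := by rw [← hBeq]; exact ENNReal.ofReal_ne_top
  -- g lintegral bounded by B
  have hgB : (∫⁻ τ in Ioo 0 T, ENNReal.ofReal (g τ)) ≤ B := by
    rw [hB]
    refine lintegral_mono_ae ((ae_restrict_mem measurableSet_Ioo).mono ?_)
    intro τ hτ
    exact ENNReal.ofReal_le_ofReal (hgh τ hτ)
  -- integrability of φ on Ioo 0 T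
  have hφint : IntegrableOn φ (Ioo 0 T) := by
    refine Integrable.mono hint hφmeas.aestronglyMeasurable ?_
    refine (ae_restrict_mem measurableSet_Ioo).mono ?_
    intro τ hτ
    rw [Real.norm_eq_abs, Real.norm_eq_abs, habsφ τ hτ.1, abs_of_nonneg (hhnn τ hτ)]
    exact hgh τ hτ
  -- continuous primitive
  set φi : ℝ → ℝ := (Ioo (0:ℝ) T).indicator φ with hφi
  have hφiint : Integrable φi := (integrable_indicator_iff measurableSet_Ioo).2 hφint
  set Fc : ℝ → ℝ := fun t => ∫ τ in (0:ℝ)..t, φi τ with hFc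
  have hFccont : Continuous Fc :=
    intervalIntegral.continuous_primitive (fun a b => hφiint.intervalIntegrable) 0
  set F : ℝ → ℝ := fun t => ∫ τ in Ioo 0 t, φ τ with hF
  have hFeq : ∀ t ∈ Ioo (0:ℝ) T, F t = Fc t := by
    intro t ht
    show (∫ τ in Ioo 0 t, φ τ) = ∫ τ in (0:ℝ)..t, φi τ
    rw [intervalIntegral.integral_of_le ht.1.le, MeasureTheory.integral_Ioc_eq_integral_Ioo]
    refine (setIntegral_congr_fun measurableSet_Ioo fun τ hτ => ?_).symm
    have hτ' := Set.mem_Ioo.1 hτ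
    exact Set.indicator_of_mem (Set.mem_Ioo.2 ⟨hτ'.1, hτ'.2.trans ht.2⟩) φ
  -- integrability of g
  have hgint : IntegrableOn g (Ioo 0 T) := by
    refine Integrable.mono hint hgmeas.aestronglyMeasurable ?_
    refine (ae_restrict_mem measurableSet_Ioo).mono ?_
    intro τ hτ
    rw [Real.norm_eq_abs, Real.norm_eq_abs, abs_of_nonneg (hgnn τ hτ),
      abs_of_nonneg (hhnn τ hτ)]
    exact hgh τ hτ
  -- the main lintegral bound
  set A : ℝ≥0∞ := ∫⁻ t in Ioo 0 T, ENNReal.ofReal (w t * |F t| / t) with hA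
  set Φ : ℝ × ℝ → ℝ≥0∞ := fun p =>
    if p.2 < p.1 then ENNReal.ofReal (w p.1 / p.1) * ENNReal.ofReal (g p.2) else 0 with hΦ
  have hΦmeas : Measurable Φ := by
    refine Measurable.ite (measurableSet_lt measurable_snd measurable_fst) ?_ measurable_const
    exact (ENNReal.measurable_ofReal.comp ((hwmeas.div measurable_id).comp measurable_fst)).mul
      (ENNReal.measurable_ofReal.comp (hgmeas.comp measurable_snd))
  have step1 : A ≤ ∫⁻ t in Ioo 0 T,
      ENNReal.ofReal (w t / t) * (∫⁻ τ in Ioo 0 t, ENNReal.ofReal (g τ)) := by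
    refine lintegral_mono_ae ((ae_restrict_mem measurableSet_Ioo).mono ?_)
    intro t ht
    set L : ℝ≥0∞ := ∫⁻ τ in Ioo 0 t, ENNReal.ofReal (g τ) with hL
    have hsub : Ioo (0:ℝ) t ⊆ Ioo 0 T := Ioo_subset_Ioo le_rfl ht.2.le
    have hLfin : L ≠ ⊤ :=
      ne_top_of_le_ne_top hBfin (le_trans (lintegral_mono_set hsub) hgB)
    have h1 : |F t| ≤ ∫ τ in Ioo 0 t, g τ := by
      refine le_trans (norm_integral_le_integral_norm φ) ?_
      refine le_of_eq (setIntegral_congr_fun measurableSet_Ioo fun τ hτ => ?_)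
      rw [Real.norm_eq_abs, habsφ τ hτ.1]
    have h2 : (∫ τ in Ioo 0 t, g τ) = L.toReal := by
      refine integral_eq_lintegral_of_nonneg_ae ?_ hgmeas.aestronglyMeasurable
      refine (ae_restrict_mem measurableSet_Ioo).mono fun τ hτ => ?_
      exact div_nonneg (mul_nonneg (inv_nonneg.2 (abs_nonneg _)) (abs_nonneg _)) hτ.1.le
    have h3 : w t * |F t| / t ≤ w t / t * L.toReal := by
      have heq : w t * |F t| / t = w t / t * |F t| := by ring
      rw [heq]
      exact mul_le_mul_of_nonneg_left (h1.trans_eq h2)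
        (div_nonneg (abs_nonneg _) ht.1.le)
    refine le_trans (ENNReal.ofReal_le_ofReal h3) (le_of_eq ?_)
    rw [ENNReal.ofReal_mul (div_nonneg (abs_nonneg _) ht.1.le),
      ENNReal.ofReal_toReal hLfin]
  have step2 : (∫⁻ t in Ioo 0 T,
        ENNReal.ofReal (w t / t) * (∫⁻ τ in Ioo 0 t, ENNReal.ofReal (g τ)))
      = ∫⁻ t in Ioo 0 T, ∫⁻ τ in Ioo 0 T, Φ (t, τ) := by
    refine lintegral_congr_ae ((ae_restrict_mem measurableSet_Ioo).mono fun t ht => ?_)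
    have hident : ∀ τ : ℝ, Φ (t, τ)
        = (Iio t).indicator (fun τ => ENNReal.ofReal (w t / t) * ENNReal.ofReal (g τ)) τ := by
      intro τ
      simp only [hΦ, Set.indicator_apply, Set.mem_Iio]
    have hset : Iio t ∩ Ioo 0 T = Ioo 0 t := by
      ext x
      simp only [Set.mem_inter_iff, Set.mem_Iio, Set.mem_Ioo]
      constructor
      · rintro ⟨h1, h2, h3⟩; exact ⟨h2, h1⟩
      · rintro ⟨h1, h2⟩; exact ⟨h2, h1, h2.trans ht.2⟩
    calc ENNReal.ofReal (w t / t) * (∫⁻ τ in Ioo 0 t, ENNReal.ofReal (g τ))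
        = ∫⁻ τ in Ioo 0 t, ENNReal.ofReal (w t / t) * ENNReal.ofReal (g τ) :=
          (lintegral_const_mul' _ _ ENNReal.ofReal_ne_top).symm
      _ = ∫⁻ τ in Iio t ∩ Ioo 0 T,
            ENNReal.ofReal (w t / t) * ENNReal.ofReal (g τ) := by rw [hset]
      _ = ∫⁻ τ in Ioo 0 T, (Iio t).indicator
            (fun τ => ENNReal.ofReal (w t / t) * ENNReal.ofReal (g τ)) τ := by
          rw [← Measure.restrict_restrict measurableSet_Iio,
            lintegral_indicator measurableSet_Iio]
      _ = ∫⁻ τ in Ioo 0 T, Φ (t, τ) := by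
          refine lintegral_congr fun τ => ?_
          rw [hident τ]
  have step3 : (∫⁻ t in Ioo 0 T, ∫⁻ τ in Ioo 0 T, Φ (t, τ))
      = ∫⁻ τ in Ioo 0 T, ∫⁻ t in Ioo 0 T, Φ (t, τ) :=
    lintegral_lintegral_swap (hΦmeas.aemeasurable)
  have step4 : (∫⁻ τ in Ioo 0 T, ∫⁻ t in Ioo 0 T, Φ (t, τ))
      ≤ ∫⁻ τ in Ioo 0 T, ENNReal.ofReal (1/2) * ENNReal.ofReal (h τ) := by
    refine lintegral_mono_ae ((ae_restrict_mem measurableSet_Ioo).mono fun τ hτ => ?_)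
    have hident : ∀ t : ℝ, Φ (t, τ)
        = (Ioi τ).indicator (fun t => ENNReal.ofReal (w t / t) * ENNReal.ofReal (g τ)) t := by
      intro t
      simp only [hΦ, Set.indicator_apply, Set.mem_Ioi]
    have hset : Ioi τ ∩ Ioo 0 T = Ioo τ T := by
      ext x
      simp only [Set.mem_inter_iff, Set.mem_Ioi, Set.mem_Ioo]
      constructor
      · rintro ⟨h1, h2, h3⟩; exact ⟨h1, h3⟩
      · rintro ⟨h1, h2⟩; exact ⟨h1, hτ.1.trans h1, h2⟩
    have hKint : IntegrableOn (fun t => w t / t) (Ioo τ T) :=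
      (((wcont hT hτ.1).integrableOn_Icc)).mono_set Set.Ioo_subset_Icc_self
    have hKval : (∫⁻ t in Ioo τ T, ENNReal.ofReal (w t / t))
        = ENNReal.ofReal (∫ t in Ioo τ T, w t / t) := by
      refine (ofReal_integral_eq_lintegral_ofReal hKint ?_).symm
      refine (ae_restrict_mem measurableSet_Ioo).mono fun t ht => ?_
      exact div_nonneg (abs_nonneg _) ((hτ.1.trans ht.1).le)
    have hKle : (∫⁻ t in Ioo τ T, ENNReal.ofReal (w t / t))
        ≤ ENNReal.ofReal (w τ ^ 2 / 2) := by
      rw [hKval]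
      exact ENNReal.ofReal_le_ofReal (keyint hT hτ.1 hτ.2)
    calc (∫⁻ t in Ioo 0 T, Φ (t, τ))
        = ∫⁻ t in Ioo 0 T, (Ioi τ).indicator
            (fun t => ENNReal.ofReal (w t / t) * ENNReal.ofReal (g τ)) t := by
          refine lintegral_congr fun t => ?_
          rw [hident t]
      _ = ∫⁻ t in Ioi τ ∩ Ioo 0 T,
            ENNReal.ofReal (w t / t) * ENNReal.ofReal (g τ) := by
          rw [← Measure.restrict_restrict measurableSet_Ioi,
            lintegral_indicator measurableSet_Ioi]
      _ = (∫⁻ t in Ioo τ T, ENNReal.ofReal (w t / t)) * ENNReal.ofReal (g τ) := by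
          rw [hset]
          exact lintegral_mul_const' _ _ ENNReal.ofReal_ne_top
      _ ≤ ENNReal.ofReal (w τ ^ 2 / 2) * ENNReal.ofReal (g τ) :=
          mul_le_mul_left hKle _
      _ = ENNReal.ofReal (1/2) * ENNReal.ofReal (h τ) := by
          rw [← ENNReal.ofReal_mul (by positivity), ← ENNReal.ofReal_mul (by norm_num)]
          congr 1
          have hw1 : (1:ℝ) ≤ w τ := wone hT hτ.1 hτ.2.le
          have hwne : w τ ≠ 0 := ne_of_gt (lt_of_lt_of_le one_pos hw1)
          have hτne : τ ≠ 0 := ne_of_gt hτ.1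
          simp only [hg, hh]
          field_simp
  have step5 : (∫⁻ τ in Ioo 0 T, ENNReal.ofReal (1/2) * ENNReal.ofReal (h τ))
      = ENNReal.ofReal (1/2) * B := by
    rw [hB]
    exact lintegral_const_mul' _ _ ENNReal.ofReal_ne_top
  have hmain : A ≤ ENNReal.ofReal (1/2) * B := by
    calc A ≤ _ := step1
      _ = _ := step2
      _ = _ := step3
      _ ≤ _ := step4
      _ = _ := step5
  -- conclude
  have hLHSmeas : AEStronglyMeasurable (fun t => w t * |F t| / t)
      (volume.restrict (Ioo 0 T)) := by
    have hm : Measurable (fun t => w t * |Fc t| / t) :=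
      (hwmeas.mul (hFccont.abs.measurable)).div measurable_id
    refine hm.aestronglyMeasurable.congr ?_
    refine (ae_restrict_mem measurableSet_Ioo).mono fun t ht => ?_
    show w t * |Fc t| / t = w t * |F t| / t
    rw [hFeq t ht]
  have hLHSnn : 0 ≤ᵐ[volume.restrict (Ioo 0 T)] fun t => w t * |F t| / t := by
    refine (ae_restrict_mem measurableSet_Ioo).mono fun t ht => ?_
    exact div_nonneg (mul_nonneg (abs_nonneg _) (abs_nonneg _)) ht.1.le
  have hLHS : (∫ t in Ioo 0 T, w t * |F t| / t) = A.toReal :=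
    integral_eq_lintegral_of_nonneg_ae hLHSnn hLHSmeas
  have hR : (∫ t in Ioo 0 T, h t) = B.toReal := by
    rw [← hBeq, ENNReal.toReal_ofReal (setIntegral_nonneg measurableSet_Ioo hhnn)]
  show (∫ t in Ioo 0 T, w t * |F t| / t) ≤ 1 / 2 * ∫ t in Ioo 0 T, h t
  rw [hLHS, hR]
  calc A.toReal ≤ (ENNReal.ofReal (1/2) * B).toReal :=
        ENNReal.toReal_mono (ENNReal.mul_ne_top ENNReal.ofReal_ne_top hBfin) hmain
    _ = (1/2) * B.toReal := by
        rw [ENNReal.toReal_mul, ENNReal.toReal_ofReal (by norm_num)]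
end

section
/- Let T > 0 and let f : (0,T) → ℝ be measurable. Define F(t) = ∫₀ᵗ |ln(τ/(e·T))|^{-1} f(τ)/τ dτ for 0 < t < T. Then sup_{0<t<T} |ln(t/(e·T))| · |F(t)| ≤ sup_{0<t<T} |ln(t/(e·T))| · |f(t)|. -/
open MeasureTheory Set Filter Topology

lemma aux_int (c t : ℝ) (ht : 0 < t) (htc : t < c) :
    IntegrableOn (fun τ => ((Real.log c - Real.log τ) ^ 2)⁻¹ / τ) (Ioo 0 t) volume ∧
      ∫ τ in Ioo 0 t, ((Real.log c - Real.log τ) ^ 2)⁻¹ / τ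
        = (Real.log c - Real.log t)⁻¹ := by
  set B : ℝ → ℝ := fun τ => ((Real.log c - Real.log τ) ^ 2)⁻¹ / τ with hB
  set G : ℝ → ℝ := fun τ => (Real.log c - Real.log τ)⁻¹ with hG
  have hderiv : ∀ x : ℝ, 0 < x → x < c → HasDerivAt G (B x) x := by
    intro x hx hxc
    have hlog : Real.log x < Real.log c := Real.log_lt_log hx hxc
    have hl : 0 < Real.log c - Real.log x := by linarith
    have h1 : HasDerivAt (fun τ => Real.log c - Real.log τ) (-x⁻¹) x :=
      (Real.hasDerivAt_log hx.ne').const_sub _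
    have h2 := h1.inv hl.ne'
    refine h2.congr_deriv ?_
    simp only [hB]
    field_simp
  set a : ℕ → ℝ := fun n => t * (1 / 2) ^ n with ha
  have han : ∀ n : ℕ, 0 < a n := fun n => by positivity
  have hant : ∀ n : ℕ, a n ≤ t := by
    intro n
    have h1 : ((1:ℝ) / 2) ^ n ≤ 1 := pow_le_one₀ (by norm_num) (by norm_num)
    calc a n = t * (1 / 2) ^ n := rfl
      _ ≤ t * 1 := by nlinarith [pow_nonneg (by norm_num : (0:ℝ) ≤ 1/2) n]
      _ = t := mul_one t
  have ha0 : Tendsto a atTop (𝓝 0) := by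
    have := (tendsto_pow_atTop_nhds_zero_of_lt_one (by norm_num : (0:ℝ) ≤ 1/2)
      (by norm_num : (1:ℝ)/2 < 1)).const_mul t
    rw [mul_zero] at this
    simpa [ha, one_div] using this
  have cover : AECover (volume.restrict (Ioo 0 t)) atTop (fun n => Ioc (a n) t) :=
    aecover_Ioo_of_Ioc ha0 tendsto_const_nhds
  have hBcont : ∀ n : ℕ, ContinuousOn B (Icc (a n) t) := by
    intro n
    have hclog : ContinuousOn Real.log (Icc (a n) t) :=
      Real.continuousOn_log.mono (fun x hx => by
        simp only [mem_compl_iff, mem_singleton_iff]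
        exact ((han n).trans_le hx.1).ne')
    refine ContinuousOn.div ?_ continuousOn_id (fun x hx => ((han n).trans_le hx.1).ne')
    refine ContinuousOn.inv₀ ((continuousOn_const.sub hclog).pow 2) (fun x hx => ?_)
    have hx0 : 0 < x := (han n).trans_le hx.1
    have hxc : x < c := lt_of_le_of_lt hx.2 htc
    have : Real.log x < Real.log c := Real.log_lt_log hx0 hxc
    exact pow_ne_zero 2 (sub_ne_zero_of_ne this.ne')
  have hval : ∀ n : ℕ, ∫ x in Ioc (a n) t, B x = G t - G (a n) := by
    intro n
    rw [← intervalIntegral.integral_of_le (hant n)]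
    refine intervalIntegral.integral_eq_sub_of_hasDerivAt (fun x hx => ?_) ?_
    · rw [uIcc_of_le (hant n)] at hx
      exact hderiv x ((han n).trans_le hx.1) (lt_of_le_of_lt hx.2 htc)
    · exact ((hBcont n).mono (by rw [uIcc_of_le (hant n)])).intervalIntegrable
  have hinter : ∀ n : ℕ, Ioc (a n) t ∩ Ioo 0 t = Ioo (a n) t := by
    intro n
    ext x
    simp only [mem_inter_iff, mem_Ioc, mem_Ioo]
    constructor
    · rintro ⟨⟨h1, h2⟩, ⟨h3, h4⟩⟩; exact ⟨h1, h4⟩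
    · rintro ⟨h1, h2⟩; exact ⟨⟨h1, h2.le⟩, ⟨(han n).trans h1, h2⟩⟩
  have hval' : ∀ n : ℕ, ∫ x in Ioc (a n) t, B x ∂(volume.restrict (Ioo 0 t))
      = G t - G (a n) := by
    intro n
    rw [Measure.restrict_restrict measurableSet_Ioc, hinter n,
      ← integral_Ioc_eq_integral_Ioo, hval n]
  have hIntn : ∀ n : ℕ, IntegrableOn B (Ioc (a n) t) (volume.restrict (Ioo 0 t)) := by
    intro n
    rw [IntegrableOn, Measure.restrict_restrict measurableSet_Ioc, hinter n]
    exact ((hBcont n).integrableOn_Icc).mono_set Ioo_subset_Icc_self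
  have hnng : ∀ᵐ x ∂(volume.restrict (Ioo 0 t)), 0 ≤ B x := by
    filter_upwards [ae_restrict_mem measurableSet_Ioo] with x hx
    have : (0:ℝ) < x := hx.1
    positivity
  have hga : Tendsto (fun n => G (a n)) atTop (𝓝 0) := by
    have h1 : Tendsto a atTop (𝓝[>] 0) :=
      tendsto_nhdsWithin_of_tendsto_nhds_of_eventually_within _ ha0
        (Eventually.of_forall fun n => han n)
    have h2 : Tendsto Real.log (𝓝[>] (0:ℝ)) atBot := Real.tendsto_log_nhdsGT_zero
    have h3 : Tendsto (fun y : ℝ => Real.log c - y) atBot atTop := by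
      simpa [sub_eq_add_neg] using
        tendsto_atTop_add_const_left atBot (Real.log c) (tendsto_neg_atBot_atTop (G := ℝ))
    have h4 := (h3.comp (h2.comp h1)).inv_tendsto_atTop
    simpa [hG, Function.comp_def, Pi.inv_def] using h4
  have htend : Tendsto (fun n => ∫ x in Ioc (a n) t, B x ∂(volume.restrict (Ioo 0 t)))
      atTop (𝓝 (G t)) := by
    simp only [hval']
    simpa using tendsto_const_nhds.sub hga
  have hInt : Integrable B (volume.restrict (Ioo 0 t)) :=
    cover.integrable_of_integral_tendsto_of_nonneg_ae (G t) hIntn hnng htend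
  exact ⟨hInt, cover.integral_eq_of_tendsto (G t) hInt htend⟩

theorem stmt_5 (T : ℝ) (hT : 0 < T) (f : ℝ → ℝ) (hf : Measurable f)
    (hbd : ∃ M : ℝ, ∀ᵐ t ∂(volume.restrict (Ioo 0 T)),
      |Real.log (t / (Real.exp 1 * T))| * |f t| ≤ M) :
    essSup (fun t => |Real.log (t / (Real.exp 1 * T))| *
        |∫ τ in Ioo 0 t, |Real.log (τ / (Real.exp 1 * T))|⁻¹ * f τ / τ|)
        (volume.restrict (Ioo 0 T))
      ≤ essSup (fun t => |Real.log (t / (Real.exp 1 * T))| * |f t|)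
        (volume.restrict (Ioo 0 T)) := by
  obtain ⟨M, hM⟩ := hbd
  set c : ℝ := Real.exp 1 * T with hcdef
  have hc1 : (1:ℝ) < Real.exp 1 := by
    have := Real.exp_one_gt_d9
    linarith
  have hTc : T < c := by rw [hcdef]; nlinarith
  have hc0 : (0:ℝ) < c := hT.trans hTc
  have habs : ∀ τ : ℝ, 0 < τ → τ < c → |Real.log (τ / c)| = Real.log c - Real.log τ := by
    intro τ h1 h2
    have h3 : Real.log τ < Real.log c := Real.log_lt_log h1 h2
    rw [Real.log_div h1.ne' hc0.ne', abs_of_neg (by linarith)]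
    ring
  set μ := volume.restrict (Ioo (0:ℝ) T) with hμdef
  have hμ : μ ≠ 0 := by
    rw [hμdef, Ne, Measure.restrict_eq_zero, Real.volume_Ioo]
    simp only [sub_zero, ENNReal.ofReal_eq_zero, not_le]
    exact hT
  haveI : (ae μ).NeBot := ae_neBot.2 hμ
  set S := essSup (fun t => |Real.log (t / c)| * |f t|) μ with hSdef
  have hbdd : IsBoundedUnder (· ≤ ·) (ae μ) (fun t => |Real.log (t / c)| * |f t|) :=
    ⟨M, eventually_map.mpr hM⟩
  have hle : ∀ᵐ t ∂μ, |Real.log (t / c)| * |f t| ≤ S := ae_le_essSup hbdd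
  have hS0 : 0 ≤ S := by
    obtain ⟨x, hx1, hx2⟩ := (hle.and (Eventually.of_forall fun x =>
      mul_nonneg (abs_nonneg (Real.log (x / c))) (abs_nonneg (f x)))).exists
    linarith
  have hfS : ∀ᵐ τ ∂μ, |f τ| ≤ S * (Real.log c - Real.log τ)⁻¹ := by
    filter_upwards [hle, ae_restrict_mem measurableSet_Ioo] with τ h1 h2
    have hτc : τ < c := h2.2.trans hTc
    have hl : 0 < Real.log c - Real.log τ := by
      have := Real.log_lt_log h2.1 hτc; linarith
    rw [habs τ h2.1 hτc, mul_comm] at h1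
    rw [← div_eq_mul_inv]
    exact (le_div_iff₀ hl).2 h1
  refine limsup_le_of_le (isCoboundedUnder_le_of_le _ (x := 0) (fun x =>
    mul_nonneg (abs_nonneg _) (abs_nonneg _))) ?_
  filter_upwards [ae_restrict_mem measurableSet_Ioo] with t ht
  have ht0 : 0 < t := ht.1
  have htc : t < c := ht.2.trans hTc
  have hlt : 0 < Real.log c - Real.log t := by
    have := Real.log_lt_log ht0 htc; linarith
  obtain ⟨hIB, hvalB⟩ := aux_int c t ht0 htc
  have hfS' : ∀ᵐ τ ∂(volume.restrict (Ioo 0 t)),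
      |f τ| ≤ S * (Real.log c - Real.log τ)⁻¹ :=
    ae_restrict_of_ae_restrict_of_subset (Ioo_subset_Ioo_right ht.2.le) hfS
  have hbound : ∀ᵐ τ ∂(volume.restrict (Ioo 0 t)),
      ‖|Real.log (τ / c)|⁻¹ * f τ / τ‖
        ≤ S * (((Real.log c - Real.log τ) ^ 2)⁻¹ / τ) := by
    filter_upwards [hfS', ae_restrict_mem measurableSet_Ioo] with τ h1 h2
    have hτ0 : 0 < τ := h2.1
    have hτc : τ < c := h2.2.trans htc
    have hl : 0 < Real.log c - Real.log τ := by
      have := Real.log_lt_log hτ0 hτc; linarith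
    rw [Real.norm_eq_abs, abs_div, abs_mul, abs_inv, abs_abs, abs_of_pos hτ0,
      habs τ hτ0 hτc]
    have hrw : S * (((Real.log c - Real.log τ) ^ 2)⁻¹ / τ)
        = (Real.log c - Real.log τ)⁻¹ * (S * (Real.log c - Real.log τ)⁻¹) / τ := by
      rw [sq, mul_inv]
      ring
    rw [hrw]
    gcongr
  have hmain : |∫ τ in Ioo 0 t, |Real.log (τ / c)|⁻¹ * f τ / τ|
      ≤ S * (Real.log c - Real.log t)⁻¹ := by
    calc |∫ τ in Ioo 0 t, |Real.log (τ / c)|⁻¹ * f τ / τ|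
        ≤ ∫ τ in Ioo 0 t, ‖|Real.log (τ / c)|⁻¹ * f τ / τ‖ := by
          rw [← Real.norm_eq_abs]
          exact norm_integral_le_integral_norm _
      _ ≤ ∫ τ in Ioo 0 t, S * (((Real.log c - Real.log τ) ^ 2)⁻¹ / τ) :=
          integral_mono_of_nonneg (Eventually.of_forall fun τ => norm_nonneg _)
            (hIB.const_mul S) hbound
      _ = S * ∫ τ in Ioo 0 t, ((Real.log c - Real.log τ) ^ 2)⁻¹ / τ :=
          integral_const_mul _ _
      _ = S * (Real.log c - Real.log t)⁻¹ := by rw [hvalB]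
  calc |Real.log (t / c)| * |∫ τ in Ioo 0 t, |Real.log (τ / c)|⁻¹ * f τ / τ|
      ≤ (Real.log c - Real.log t) * (S * (Real.log c - Real.log t)⁻¹) := by
        rw [habs t ht0 htc]
        exact mul_le_mul_of_nonneg_left hmain hlt.le
    _ = S := by field_simp
end

section
/- Let T > 0 and let f, g : (0,T) → ℝ be measurable with M := sup_{0<τ<T} √τ·|f(τ)| < ∞. Define J(t) = ∫_{t/2}^t (t−τ)^{-1/2} |f(τ)| |g(τ)| dτ. Then for any σ ≥ 0, sup_{0<t<T} √t · |ln(t/(e·T))|^σ · J(t) ≤ C · M · sup_{0<τ<T} √τ · |ln(τ/(e·T))|^σ · |g(τ)| for an absolute constant C. -/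
open MeasureTheory Set Filter

set_option maxHeartbeats 1000000 in
theorem stmt_10 :
    ∃ C : ℝ, 0 < C ∧ ∀ T : ℝ, 0 < T → ∀ σ : ℝ, 0 ≤ σ → ∀ f g : ℝ → ℝ,
      Measurable f → Measurable g →
      (∃ M : ℝ, ∀ᵐ τ ∂(volume.restrict (Ioo 0 T)), Real.sqrt τ * |f τ| ≤ M) →
      (∃ M : ℝ, ∀ᵐ τ ∂(volume.restrict (Ioo 0 T)),
        Real.sqrt τ * |Real.log (τ / (Real.exp 1 * T))| ^ σ * |g τ| ≤ M) →
      essSup (fun t => Real.sqrt t * |Real.log (t / (Real.exp 1 * T))| ^ σ *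
          ∫ τ in Ioo (t / 2) t, (t - τ) ^ (-(1 : ℝ) / 2) * |f τ| * |g τ|)
          (volume.restrict (Ioo 0 T))
        ≤ C * essSup (fun τ => Real.sqrt τ * |f τ|) (volume.restrict (Ioo 0 T)) *
            essSup (fun τ => Real.sqrt τ * |Real.log (τ / (Real.exp 1 * T))| ^ σ * |g τ|)
              (volume.restrict (Ioo 0 T)) := by
  refine ⟨4, by norm_num, ?_⟩
  intro T hT σ hσ f g hf hg hMf hMg
  obtain ⟨Mf, hMf⟩ := hMf
  obtain ⟨Mg, hMg⟩ := hMg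
  set μ := volume.restrict (Ioo (0:ℝ) T) with hμdef
  have hμ : μ ≠ 0 := by
    simp only [hμdef, Measure.restrict_eq_zero]
    simp [Real.volume_Ioo, hT, ENNReal.ofReal_eq_zero, not_le]
  haveI : (ae μ).NeBot := ae_neBot.2 hμ
  set A := essSup (fun τ => Real.sqrt τ * |f τ|) μ with hA
  set B := essSup (fun τ => Real.sqrt τ * |Real.log (τ / (Real.exp 1 * T))| ^ σ * |g τ|) μ with hB
  have haeA : ∀ᵐ τ ∂μ, Real.sqrt τ * |f τ| ≤ A := ae_le_essSup ⟨Mf, hMf⟩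
  have haeB : ∀ᵐ τ ∂μ, Real.sqrt τ * |Real.log (τ / (Real.exp 1 * T))| ^ σ * |g τ| ≤ B :=
    ae_le_essSup ⟨Mg, hMg⟩
  have hA0 : 0 ≤ A := by
    obtain ⟨x, hx⟩ := haeA.exists
    exact le_trans (by positivity) hx
  have hB0 : 0 ≤ B := by
    obtain ⟨x, hx⟩ := haeB.exists
    exact le_trans (by positivity) hx
  have haeA' : ∀ᵐ τ, τ ∈ Ioo (0:ℝ) T → Real.sqrt τ * |f τ| ≤ A :=
    (ae_restrict_iff' measurableSet_Ioo).mp haeA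
  have haeB' : ∀ᵐ τ, τ ∈ Ioo (0:ℝ) T →
      Real.sqrt τ * |Real.log (τ / (Real.exp 1 * T))| ^ σ * |g τ| ≤ B :=
    (ae_restrict_iff' measurableSet_Ioo).mp haeB
  have main : ∀ t ∈ Ioo (0:ℝ) T,
      Real.sqrt t * |Real.log (t / (Real.exp 1 * T))| ^ σ *
        ∫ τ in Ioo (t / 2) t, (t - τ) ^ (-(1 : ℝ) / 2) * |f τ| * |g τ| ≤ 4 * A * B := by
    intro t ht
    obtain ⟨ht0, htT⟩ := ht
    set L := |Real.log (t / (Real.exp 1 * T))| ^ σ with hL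
    have hlogt : Real.log (t / (Real.exp 1 * T)) ≤ -1 := by
      rw [Real.log_div (ne_of_gt ht0) (by positivity), Real.log_mul (by positivity) (ne_of_gt hT),
        Real.log_exp]
      have := Real.log_le_log ht0 htT.le
      linarith
    have hL1 : 1 ≤ L := by
      apply Real.one_le_rpow _ hσ
      rw [abs_of_nonpos (by linarith)]
      linarith
    have hLpos : 0 < L := lt_of_lt_of_le one_pos hL1
    set c := 2 * A * B / (t * L) with hc
    have hc0 : 0 ≤ c := by positivity
    -- pointwise bound on the integrand
    have hptwise : ∀ᵐ τ ∂(volume.restrict (Ioo (t/2) t)),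
        (t - τ) ^ (-(1 : ℝ) / 2) * |f τ| * |g τ| ≤ (t - τ) ^ (-(1 : ℝ) / 2) * c := by
      have hsub : Ioo (t/2) t ⊆ Ioo (0:ℝ) T := fun τ hτ =>
        ⟨lt_trans (by linarith) hτ.1, lt_trans hτ.2 htT⟩
      filter_upwards [ae_restrict_mem measurableSet_Ioo,
        ae_restrict_of_ae (μ := volume) (s := Ioo (t/2) t) haeA',
        ae_restrict_of_ae (μ := volume) (s := Ioo (t/2) t) haeB'] with τ hτ h1 h2
      have hτT := hsub hτ
      have hτ0 : 0 < τ := hτT.1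
      have h1 := h1 hτT
      have h2 := h2 hτT
      have hlogτ : |Real.log (t / (Real.exp 1 * T))| ≤ |Real.log (τ / (Real.exp 1 * T))| := by
        have hlτ : Real.log (τ / (Real.exp 1 * T)) ≤ Real.log (t / (Real.exp 1 * T)) :=
          Real.log_le_log (by positivity) (by gcongr; exact hτ.2.le)
        have hlτ' : Real.log (τ / (Real.exp 1 * T)) ≤ -1 := le_trans hlτ hlogt
        rw [abs_of_nonpos (by linarith), abs_of_nonpos (by linarith)]
        linarith
      have hLτ : L ≤ |Real.log (τ / (Real.exp 1 * T))| ^ σ :=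
        Real.rpow_le_rpow (abs_nonneg _) hlogτ hσ
      have hsq : Real.sqrt τ * Real.sqrt τ = τ := Real.mul_self_sqrt hτ0.le
      have hfg : τ * (|Real.log (τ / (Real.exp 1 * T))| ^ σ) * (|f τ| * |g τ|) ≤ A * B := by
        have h3 := mul_le_mul h1 h2 (by positivity) hA0
        calc τ * (|Real.log (τ / (Real.exp 1 * T))| ^ σ) * (|f τ| * |g τ|)
            = (Real.sqrt τ * Real.sqrt τ) * (|Real.log (τ / (Real.exp 1 * T))| ^ σ)
              * (|f τ| * |g τ|) := by rw [hsq]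
          _ = (Real.sqrt τ * |f τ|) *
              (Real.sqrt τ * |Real.log (τ / (Real.exp 1 * T))| ^ σ * |g τ|) := by ring
          _ ≤ A * B := h3
      have hfg2 : |f τ| * |g τ| ≤ c := by
        rw [hc, le_div_iff₀ (by positivity)]
        have h3 : (t/2) * L * (|f τ| * |g τ|) ≤
            τ * (|Real.log (τ / (Real.exp 1 * T))| ^ σ) * (|f τ| * |g τ|) := by
          apply mul_le_mul_of_nonneg_right _ (by positivity)
          exact mul_le_mul hτ.1.le hLτ hLpos.le hτ0.le
        nlinarith [hfg, h3]
      have hpow0 : (0:ℝ) ≤ (t - τ) ^ (-(1 : ℝ) / 2) :=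
        Real.rpow_nonneg (by linarith [hτ.2]) _
      calc (t - τ) ^ (-(1 : ℝ) / 2) * |f τ| * |g τ|
          = (t - τ) ^ (-(1 : ℝ) / 2) * (|f τ| * |g τ|) := by ring
        _ ≤ (t - τ) ^ (-(1 : ℝ) / 2) * c := mul_le_mul_of_nonneg_left hfg2 hpow0
    -- integrability of the majorant
    have hintrpow : IntegrableOn (fun τ => (t - τ) ^ (-(1 : ℝ) / 2)) (Ioo (t/2) t) := by
      have h0 : IntervalIntegrable (fun τ => (t - τ) ^ (-(1 : ℝ) / 2)) volume (t/2) t := by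
        have h := ((intervalIntegral.intervalIntegrable_rpow'
          (a := 0) (b := t/2) (r := -(1:ℝ)/2) (by norm_num)).comp_sub_left t).symm
        have e1 : t - 0 = t := by ring
        have e2 : t - t / 2 = t / 2 := by ring
        rwa [e1, e2] at h
      rw [intervalIntegrable_iff_integrableOn_Ioo_of_le (by linarith)] at h0
      exact h0
    have hintmaj : IntegrableOn (fun τ => (t - τ) ^ (-(1 : ℝ) / 2) * c) (Ioo (t/2) t) :=
      hintrpow.mul_const c
    -- nonnegativity of the integrand
    have hnonneg : 0 ≤ᵐ[volume.restrict (Ioo (t/2) t)]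
        fun τ => (t - τ) ^ (-(1 : ℝ) / 2) * |f τ| * |g τ| := by
      filter_upwards [ae_restrict_mem (measurableSet_Ioo (a := t/2) (b := t))] with τ hτ
      have : (0:ℝ) ≤ (t - τ) ^ (-(1 : ℝ) / 2) := Real.rpow_nonneg (by linarith [hτ.2]) _
      positivity
    -- the value of the rpow integral
    have hIval : ∫ τ in Ioo (t/2) t, (t - τ) ^ (-(1 : ℝ) / 2) ≤ 2 * Real.sqrt t := by
      rw [← integral_Ioc_eq_integral_Ioo, ← intervalIntegral.integral_of_le (by linarith)]
      have h1 : (∫ τ in (t/2)..t, (t - τ) ^ (-(1 : ℝ) / 2))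
          = ∫ x in (0:ℝ)..(t/2), x ^ (-(1 : ℝ) / 2) := by
        have h := intervalIntegral.integral_comp_sub_left (a := t/2) (b := t)
          (fun x => x ^ (-(1 : ℝ) / 2)) t
        simpa [show t - t / 2 = t / 2 by ring] using h
      rw [h1, integral_rpow (Or.inl (by norm_num))]
      have e0 : (0:ℝ) ^ (-(1:ℝ)/2 + 1) = 0 := by
        rw [Real.zero_rpow]; norm_num
      rw [e0]
      have e2 : (t/2) ^ ((-(1:ℝ)/2) + 1) = Real.sqrt (t/2) := by
        rw [show (-(1:ℝ)/2) + 1 = 1/2 by norm_num, Real.sqrt_eq_rpow]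
      rw [e2]
      have e3 : Real.sqrt (t/2) ≤ Real.sqrt t := Real.sqrt_le_sqrt (by linarith)
      rw [show (-(1:ℝ)/2) + 1 = 1/2 by norm_num]
      rw [sub_zero, div_le_iff₀ (by norm_num : (0:ℝ) < 1/2)] at *
      linarith
    -- bound the integral
    have hJ : (∫ τ in Ioo (t/2) t, (t - τ) ^ (-(1 : ℝ) / 2) * |f τ| * |g τ|)
        ≤ (∫ τ in Ioo (t/2) t, (t - τ) ^ (-(1 : ℝ) / 2)) * c := by
      calc (∫ τ in Ioo (t/2) t, (t - τ) ^ (-(1 : ℝ) / 2) * |f τ| * |g τ|)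
          ≤ ∫ τ in Ioo (t/2) t, (t - τ) ^ (-(1 : ℝ) / 2) * c :=
            integral_mono_of_nonneg hnonneg hintmaj hptwise
        _ = _ := integral_mul_const c _
    have hJ2 : (∫ τ in Ioo (t/2) t, (t - τ) ^ (-(1 : ℝ) / 2) * |f τ| * |g τ|)
        ≤ 2 * Real.sqrt t * c :=
      hJ.trans (mul_le_mul_of_nonneg_right hIval hc0)
    have key : Real.sqrt t * L * (2 * Real.sqrt t * c) = 4 * A * B := by
      have hsqt : Real.sqrt t * Real.sqrt t = t := Real.mul_self_sqrt ht0.le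
      rw [hc]
      field_simp
      linear_combination (4 * A * B) * hsqt
    calc Real.sqrt t * L *
          ∫ τ in Ioo (t / 2) t, (t - τ) ^ (-(1 : ℝ) / 2) * |f τ| * |g τ|
        ≤ Real.sqrt t * L * (2 * Real.sqrt t * c) :=
          mul_le_mul_of_nonneg_left hJ2 (by positivity)
      _ = 4 * A * B := key
  have hev : ∀ᶠ t in ae μ, Real.sqrt t * |Real.log (t / (Real.exp 1 * T))| ^ σ *
      (∫ τ in Ioo (t / 2) t, (t - τ) ^ (-(1 : ℝ) / 2) * |f τ| * |g τ|) ≤ 4 * A * B :=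
    Filter.eventually_of_mem (self_mem_ae_restrict measurableSet_Ioo) main
  have hrpow0 : ∀ x : ℝ, 0 ≤ x ^ (-(1:ℝ)/2) := by
    intro x
    rcases le_or_gt 0 x with h | h
    · exact Real.rpow_nonneg h _
    · rw [Real.rpow_def_of_neg h]
      have hcos : Real.cos (-(1:ℝ)/2 * Real.pi) = 0 := by
        rw [show (-(1:ℝ)/2 * Real.pi) = -(Real.pi/2) by ring, Real.cos_neg,
          Real.cos_pi_div_two]
      rw [hcos, mul_zero]
  have h0 : ∀ t : ℝ, (0:ℝ) ≤ Real.sqrt t * |Real.log (t / (Real.exp 1 * T))| ^ σ *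
      ∫ τ in Ioo (t / 2) t, (t - τ) ^ (-(1 : ℝ) / 2) * |f τ| * |g τ| := by
    intro t
    refine mul_nonneg (mul_nonneg (Real.sqrt_nonneg _) (Real.rpow_nonneg (abs_nonneg _) _)) ?_
    exact integral_nonneg fun τ =>
      mul_nonneg (mul_nonneg (hrpow0 _) (abs_nonneg _)) (abs_nonneg _)
  have hco : IsCoboundedUnder (· ≤ ·) (ae μ) (fun t => Real.sqrt t *
      |Real.log (t / (Real.exp 1 * T))| ^ σ *
      ∫ τ in Ioo (t / 2) t, (t - τ) ^ (-(1 : ℝ) / 2) * |f τ| * |g τ|) :=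
    isCoboundedUnder_le_of_le _ h0
  exact limsup_le_of_le hco hev
end

section
/- Let T > 0 and let f, g : (0,T) → ℝ be measurable. Define J(t) = ∫_{t/2}^t (t−τ)^{-1/2} |f(τ)| |g(τ)| dτ. Then for any σ ≥ 0, ∫₀ᵀ √t · |ln(t/(e·T))|^σ · J(t) dt/t ≤ C · (sup_{0<τ<T} √τ·|f(τ)|) · ∫₀ᵀ √τ · |ln(τ/(e·T))|^σ · |g(τ)| dτ/τ for an absolute constant C. -/
open MeasureTheory Set Filter
open scoped ENNReal

lemma rpow_nhalf_nonneg (x : ℝ) : 0 ≤ x ^ (-(1:ℝ)/2) := by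
  rcases lt_trichotomy x 0 with h | h | h
  · rw [Real.rpow_def_of_neg h]
    have : Real.cos (-(1:ℝ)/2 * Real.pi) = 0 := by
      rw [show (-(1:ℝ)/2 * Real.pi) = -(Real.pi/2) by ring, Real.cos_neg, Real.cos_pi_div_two]
    rw [this, mul_zero]
  · subst h; rw [Real.zero_rpow (by norm_num)]
  · exact Real.rpow_nonneg h.le _

open intervalIntegral in
lemma lint_shift (τ : ℝ) (hτ : 0 < τ) :
    ∫⁻ t in Set.Ioo τ (2*τ), ENNReal.ofReal ((t - τ) ^ (-(1:ℝ)/2)) =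
      ENNReal.ofReal (2 * Real.sqrt τ) := by
  have hle : τ ≤ 2*τ := by linarith
  have hii : IntervalIntegrable (fun t => (t - τ) ^ (-(1:ℝ)/2)) volume τ (2*τ) := by
    have := (intervalIntegral.intervalIntegrable_rpow' (a := 0) (b := τ) (r := -(1:ℝ)/2)
      (by norm_num)).comp_sub_right τ
    simpa [two_mul] using this
  have hInt : IntegrableOn (fun t => (t - τ) ^ (-(1:ℝ)/2)) (Set.Ioo τ (2*τ)) volume := by
    have := (intervalIntegrable_iff_integrableOn_Ioc_of_le hle).mp hii
    exact this.mono_set Set.Ioo_subset_Ioc_self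
  rw [← ofReal_integral_eq_lintegral_ofReal hInt
      (Filter.Eventually.of_forall fun t => rpow_nhalf_nonneg _)]
  congr 1
  have h1 : ∫ t in Set.Ioo τ (2*τ), (t - τ) ^ (-(1:ℝ)/2) =
      ∫ t in τ..(2*τ), (t - τ) ^ (-(1:ℝ)/2) := by
    rw [intervalIntegral.integral_of_le hle, ← integral_Ioc_eq_integral_Ioo]
  rw [h1, intervalIntegral.integral_comp_sub_right (fun s => s ^ (-(1:ℝ)/2)) τ]
  have : ∫ s in (τ - τ)..(2*τ - τ), s ^ (-(1:ℝ)/2) = ∫ s in (0:ℝ)..τ, s ^ (-(1:ℝ)/2) := by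
    norm_num; ring_nf
  rw [this, show (∫ s in (0:ℝ)..τ, s ^ (-(1:ℝ)/2)) = (τ ^ (-(1:ℝ)/2 + 1) - (0:ℝ) ^ (-(1:ℝ)/2 + 1)) / (-(1:ℝ)/2 + 1) from integral_rpow (Or.inl (by norm_num))]
  rw [Real.zero_rpow (by norm_num)]
  rw [show (-(1:ℝ)/2 + 1) = 1/2 by norm_num, ← Real.sqrt_eq_rpow]
  ring

lemma ofReal_setIntegral_le {f : ℝ → ℝ} (hf : ∀ x, 0 ≤ f x) (s : Set ℝ) :
    ENNReal.ofReal (∫ x in s, f x) ≤ ∫⁻ x in s, ENNReal.ofReal (f x) := by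
  by_cases h : IntegrableOn f s volume
  · exact le_of_eq (ofReal_integral_eq_lintegral_ofReal h
      (Filter.Eventually.of_forall fun x => hf x))
  · rw [integral_undef h]; simp

lemma measurable_rpow_const (c : ℝ) : Measurable fun x : ℝ => x ^ c := by
  have : (fun x : ℝ => x ^ c) = fun x =>
      if 0 < x then Real.exp (Real.log x * c)
      else if x = 0 then (if c = 0 then 1 else 0)
      else Real.exp (Real.log x * c) * Real.cos (c * Real.pi) := by
    funext x
    rcases lt_trichotomy x 0 with h | h | h
    · rw [if_neg (by linarith), if_neg (ne_of_lt h), Real.rpow_def_of_neg h]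
    · subst h
      rw [if_neg (lt_irrefl _), if_pos rfl]
      by_cases hc : c = 0
      · rw [if_pos hc, hc, Real.rpow_zero]
      · rw [if_neg hc, Real.zero_rpow hc]
    · rw [if_pos h, Real.rpow_def_of_pos h]
  rw [this]
  apply Measurable.ite (measurableSet_lt measurable_const measurable_id)
  · exact (Real.measurable_log.mul measurable_const).exp
  · apply Measurable.ite (measurableSet_eq_fun measurable_id measurable_const) measurable_const
    exact ((Real.measurable_log.mul measurable_const).exp).mul measurable_const

lemma Measurable.rpow_const' {α : Type*} [MeasurableSpace α] {h : α → ℝ} (hh : Measurable h)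
    (c : ℝ) : Measurable fun x => h x ^ c := (measurable_rpow_const c).comp hh

noncomputable def HH (T σ : ℝ) (f g : ℝ → ℝ) (t τ : ℝ) : ℝ≥0∞ :=
  if 0 < t ∧ t < T ∧ t/2 < τ ∧ τ < t then
    ENNReal.ofReal (Real.sqrt t * |Real.log (t/(Real.exp 1*T))| ^ σ / t) *
      ENNReal.ofReal ((t - τ) ^ (-(1:ℝ)/2) * |f τ| * |g τ|)
  else 0

lemma HHmeas (T σ : ℝ) (f g : ℝ → ℝ) (hf : Measurable f) (hg : Measurable g) :
    Measurable (Function.uncurry (HH T σ f g)) := by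
  have hset : MeasurableSet {p : ℝ × ℝ | 0 < p.1 ∧ p.1 < T ∧ p.1/2 < p.2 ∧ p.2 < p.1} := by
    simp only [Set.setOf_and]
    exact (measurableSet_lt measurable_const measurable_fst).inter
      ((measurableSet_lt measurable_fst measurable_const).inter
      ((measurableSet_lt (measurable_fst.div_const 2) measurable_snd).inter
      (measurableSet_lt measurable_snd measurable_fst)))
  have hF : Measurable (fun p : ℝ × ℝ => ENNReal.ofReal
      (Real.sqrt p.1 * |Real.log (p.1/(Real.exp 1*T))| ^ σ / p.1) *
      ENNReal.ofReal ((p.1 - p.2) ^ (-(1:ℝ)/2) * |f p.2| * |g p.2|)) := by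
    apply Measurable.fun_mul
    · exact ENNReal.measurable_ofReal.comp
        (((measurable_fst.sqrt.mul
          (((Real.measurable_log.comp (measurable_fst.div_const _)).abs).rpow_const' σ)).div
          measurable_fst))
    · exact ENNReal.measurable_ofReal.comp
        ((((measurable_fst.sub measurable_snd).rpow_const' _).mul
          ((hf.comp measurable_snd).abs)).mul ((hg.comp measurable_snd).abs))
  exact Measurable.ite hset hF measurable_const

lemma stuff_nn (f g : ℝ → ℝ) (t τ : ℝ) : 0 ≤ (t - τ) ^ (-(1:ℝ)/2) * |f τ| * |g τ| :=
  mul_nonneg (mul_nonneg (rpow_nhalf_nonneg _) (abs_nonneg _)) (abs_nonneg _)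

lemma sliceB (T σ : ℝ) (f g : ℝ → ℝ) {t : ℝ} (ht : t ∈ Ioo (0:ℝ) T) :
    ENNReal.ofReal (Real.sqrt t * |Real.log (t/(Real.exp 1*T))| ^ σ *
      (∫ τ in Ioo (t/2) t, (t - τ) ^ (-(1:ℝ)/2) * |f τ| * |g τ|) / t)
      ≤ ∫⁻ τ, HH T σ f g t τ := by
  set c := Real.sqrt t * |Real.log (t/(Real.exp 1*T))| ^ σ / t with hc
  have hc0 : 0 ≤ c :=
    div_nonneg (mul_nonneg (Real.sqrt_nonneg _) (Real.rpow_nonneg (abs_nonneg _) _)) ht.1.le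
  have h1 : Real.sqrt t * |Real.log (t/(Real.exp 1*T))| ^ σ *
      (∫ τ in Ioo (t/2) t, (t - τ) ^ (-(1:ℝ)/2) * |f τ| * |g τ|) / t
      = c * ∫ τ in Ioo (t/2) t, (t - τ) ^ (-(1:ℝ)/2) * |f τ| * |g τ| := by
    rw [hc]; ring
  rw [h1, ENNReal.ofReal_mul hc0]
  calc ENNReal.ofReal c * ENNReal.ofReal (∫ τ in Ioo (t/2) t, (t - τ) ^ (-(1:ℝ)/2) * |f τ| * |g τ|)
      ≤ ENNReal.ofReal c *
        ∫⁻ τ in Ioo (t/2) t, ENNReal.ofReal ((t - τ) ^ (-(1:ℝ)/2) * |f τ| * |g τ|) :=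
        mul_le_mul_right (ofReal_setIntegral_le (stuff_nn f g t) _) _
    _ = ∫⁻ τ in Ioo (t/2) t,
          ENNReal.ofReal c * ENNReal.ofReal ((t - τ) ^ (-(1:ℝ)/2) * |f τ| * |g τ|) :=
        (lintegral_const_mul' _ _ ENNReal.ofReal_ne_top).symm
    _ = ∫⁻ τ, (Ioo (t/2) t).indicator
          (fun τ => ENNReal.ofReal c * ENNReal.ofReal ((t - τ) ^ (-(1:ℝ)/2) * |f τ| * |g τ|)) τ :=
        (lintegral_indicator measurableSet_Ioo _).symm
    _ = ∫⁻ τ, HH T σ f g t τ := by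
        refine lintegral_congr fun τ => ?_
        by_cases hτ : τ ∈ Ioo (t/2) t
        · rw [Set.indicator_of_mem hτ]
          unfold HH
          rw [if_pos ⟨ht.1, ht.2, hτ.1, hτ.2⟩, hc]
        · rw [Set.indicator_of_notMem hτ]
          unfold HH
          rw [if_neg]
          rintro ⟨-, -, h3, h4⟩
          exact hτ ⟨h3, h4⟩

lemma sliceC (T σ : ℝ) (hT : 0 < T) (hσ : 0 ≤ σ) (f g : ℝ → ℝ) (A : ℝ) (hA0 : 0 ≤ A) {τ : ℝ}
    (hτg : τ ∈ Ioo (0:ℝ) T → Real.sqrt τ * |f τ| ≤ A) :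
    ∫⁻ t, HH T σ f g t τ ≤
      (Ioo (0:ℝ) T).indicator (fun τ => ENNReal.ofReal (2*A) *
        ENNReal.ofReal (Real.sqrt τ * |Real.log (τ/(Real.exp 1*T))| ^ σ * |g τ| / τ)) τ := by
  by_cases hτ : τ ∈ Ioo (0:ℝ) T
  swap
  · have hz : ∀ t, HH T σ f g t τ = 0 := by
      intro t
      unfold HH
      rw [if_neg]
      rintro ⟨h1, h2, h3, h4⟩
      exact hτ ⟨by linarith, by linarith⟩
    simp only [hz, lintegral_zero]
    exact zero_le
  have hτ0 : (0:ℝ) < τ := hτ.1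
  have hfA := hτg hτ
  have hs : (0:ℝ) < Real.sqrt τ := Real.sqrt_pos.mpr hτ0
  set Lτ := |Real.log (τ/(Real.exp 1*T))| ^ σ with hLτ
  have hLτ0 : 0 ≤ Lτ := Real.rpow_nonneg (abs_nonneg _) _
  have hbound : ∀ t, HH T σ f g t τ ≤
      (Ioo τ (2*τ)).indicator (fun t => ENNReal.ofReal ((t - τ) ^ (-(1:ℝ)/2))) t *
        ENNReal.ofReal (Lτ / Real.sqrt τ * (|f τ| * |g τ|)) := by
    intro t
    unfold HH
    by_cases hcond : 0 < t ∧ t < T ∧ t/2 < τ ∧ τ < t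
    swap
    · rw [if_neg hcond]; exact zero_le
    rw [if_pos hcond]
    obtain ⟨ht0, htT, h1, h2⟩ := hcond
    have hmem : t ∈ Ioo τ (2*τ) := ⟨h2, by linarith⟩
    rw [Set.indicator_of_mem hmem]
    have key1 : Real.sqrt t * |Real.log (t/(Real.exp 1*T))| ^ σ / t ≤ Lτ / Real.sqrt τ := by
      have hst : (0:ℝ) < Real.sqrt t := Real.sqrt_pos.mpr ht0
      have e1 : Real.sqrt t / t = 1 / Real.sqrt t := by
        rw [← Real.mul_self_sqrt ht0.le]
        field_simp
        rw [Real.sqrt_sq hst.le]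
      have hlog : |Real.log (t/(Real.exp 1*T))| ≤ |Real.log (τ/(Real.exp 1*T))| := by
        have heT : (0:ℝ) < Real.exp 1 * T := by positivity
        have hlt1 : Real.log (t/(Real.exp 1*T)) < 0 := by
          apply Real.log_neg (by positivity)
          rw [div_lt_one heT]
          have h1e : (1:ℝ) < Real.exp 1 := by
            have := Real.add_one_lt_exp (x := 1) one_ne_zero
            linarith
          nlinarith
        have hlt2 : Real.log (τ/(Real.exp 1*T)) ≤ Real.log (t/(Real.exp 1*T)) := by
          apply Real.log_le_log (by positivity)
          gcongr
        rw [abs_of_neg hlt1, abs_of_neg (lt_of_le_of_lt hlt2 hlt1)]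
        linarith
      have hLle : |Real.log (t/(Real.exp 1*T))| ^ σ ≤ Lτ :=
        Real.rpow_le_rpow (abs_nonneg _) hlog hσ
      calc Real.sqrt t * |Real.log (t/(Real.exp 1*T))| ^ σ / t
          = (Real.sqrt t / t) * |Real.log (t/(Real.exp 1*T))| ^ σ := by ring
        _ = (1 / Real.sqrt t) * |Real.log (t/(Real.exp 1*T))| ^ σ := by rw [e1]
        _ ≤ (1 / Real.sqrt τ) * Lτ := by
            apply mul_le_mul ?_ hLle (Real.rpow_nonneg (abs_nonneg _) _) (by positivity)
            apply one_div_le_one_div_of_le hs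
            exact Real.sqrt_le_sqrt h2.le
        _ = Lτ / Real.sqrt τ := by ring
    have hx0 : 0 ≤ Real.sqrt t * |Real.log (t/(Real.exp 1*T))| ^ σ / t :=
      div_nonneg (mul_nonneg (Real.sqrt_nonneg _) (Real.rpow_nonneg (abs_nonneg _) _)) ht0.le
    rw [← ENNReal.ofReal_mul hx0, ← ENNReal.ofReal_mul (rpow_nhalf_nonneg _)]
    apply ENNReal.ofReal_le_ofReal
    calc Real.sqrt t * |Real.log (t/(Real.exp 1*T))| ^ σ / t *
          ((t - τ) ^ (-(1:ℝ)/2) * |f τ| * |g τ|)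
        = ((t - τ) ^ (-(1:ℝ)/2) * (|f τ| * |g τ|)) *
            (Real.sqrt t * |Real.log (t/(Real.exp 1*T))| ^ σ / t) := by ring
      _ ≤ ((t - τ) ^ (-(1:ℝ)/2) * (|f τ| * |g τ|)) * (Lτ / Real.sqrt τ) := by
          apply mul_le_mul_of_nonneg_left key1
          exact mul_nonneg (rpow_nhalf_nonneg _) (mul_nonneg (abs_nonneg _) (abs_nonneg _))
      _ = (t - τ) ^ (-(1:ℝ)/2) * (Lτ / Real.sqrt τ * (|f τ| * |g τ|)) := by ring
  calc ∫⁻ t, HH T σ f g t τ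
      ≤ ∫⁻ t, (Ioo τ (2*τ)).indicator (fun t => ENNReal.ofReal ((t - τ) ^ (-(1:ℝ)/2))) t *
          ENNReal.ofReal (Lτ / Real.sqrt τ * (|f τ| * |g τ|)) := lintegral_mono hbound
    _ = (∫⁻ t, (Ioo τ (2*τ)).indicator (fun t => ENNReal.ofReal ((t - τ) ^ (-(1:ℝ)/2))) t) *
          ENNReal.ofReal (Lτ / Real.sqrt τ * (|f τ| * |g τ|)) :=
        lintegral_mul_const' _ _ ENNReal.ofReal_ne_top
    _ = ENNReal.ofReal (2 * Real.sqrt τ) *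
          ENNReal.ofReal (Lτ / Real.sqrt τ * (|f τ| * |g τ|)) := by
        rw [lintegral_indicator measurableSet_Ioo, lint_shift τ hτ0]
    _ ≤ (Ioo (0:ℝ) T).indicator (fun τ => ENNReal.ofReal (2*A) *
          ENNReal.ofReal (Real.sqrt τ * Lτ * |g τ| / τ)) τ := by
        rw [Set.indicator_of_mem hτ, ← ENNReal.ofReal_mul (by positivity),
          ← ENNReal.ofReal_mul (by linarith)]
        apply ENNReal.ofReal_le_ofReal
        have e1 : 2 * Real.sqrt τ * (Lτ / Real.sqrt τ * (|f τ| * |g τ|))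
            = 2 * Lτ * |g τ| * |f τ| := by
          field_simp
        have e2 : 2 * A * (Real.sqrt τ * Lτ * |g τ| / τ) = 2 * Lτ * |g τ| * (A / Real.sqrt τ) := by
          field_simp
          rw [Real.sq_sqrt hτ0.le]; ring
        rw [e1, e2]
        apply mul_le_mul_of_nonneg_left _ (by positivity)
        rw [le_div_iff₀ hs]
        linarith [hfA]

theorem stmt_11 :
    ∃ C : ℝ, 0 < C ∧ ∀ T : ℝ, 0 < T → ∀ σ : ℝ, 0 ≤ σ → ∀ f g : ℝ → ℝ,
      Measurable f → Measurable g →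
      (∃ M : ℝ, ∀ᵐ τ ∂(volume.restrict (Ioo 0 T)), Real.sqrt τ * |f τ| ≤ M) →
      IntegrableOn (fun τ => Real.sqrt τ * |Real.log (τ / (Real.exp 1 * T))| ^ σ * |g τ| / τ)
        (Ioo 0 T) →
      (∫ t in Ioo 0 T, Real.sqrt t * |Real.log (t / (Real.exp 1 * T))| ^ σ *
          (∫ τ in Ioo (t / 2) t, (t - τ) ^ (-(1 : ℝ) / 2) * |f τ| * |g τ|) / t)
        ≤ C * essSup (fun τ => Real.sqrt τ * |f τ|) (volume.restrict (Ioo 0 T)) *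
            ∫ τ in Ioo 0 T,
              Real.sqrt τ * |Real.log (τ / (Real.exp 1 * T))| ^ σ * |g τ| / τ := by
  refine ⟨2, by norm_num, ?_⟩
  intro T hT σ hσ f g hf hg hbdd hint
  obtain ⟨M, hM⟩ := hbdd
  set A := essSup (fun τ => Real.sqrt τ * |f τ|) (volume.restrict (Ioo 0 T)) with hA
  have hμ : (volume.restrict (Ioo (0:ℝ) T)) ≠ 0 := by
    rw [Ne, Measure.restrict_eq_zero, Real.volume_Ioo]
    simp only [ENNReal.ofReal_eq_zero, not_le, sub_zero]
    exact hT
  have hBdd : IsBoundedUnder (· ≤ ·) (ae (volume.restrict (Ioo (0:ℝ) T)))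
      (fun τ => Real.sqrt τ * |f τ|) := ⟨M, hM⟩
  have hAe : ∀ᵐ τ ∂(volume.restrict (Ioo (0:ℝ) T)), Real.sqrt τ * |f τ| ≤ A :=
    ae_le_essSup hBdd
  have hA0 : 0 ≤ A := by
    have hne : (ae (volume.restrict (Ioo (0:ℝ) T))).NeBot := ae_neBot.mpr hμ
    have hfreq : ∃ᶠ τ in ae (volume.restrict (Ioo (0:ℝ) T)), (0:ℝ) ≤ Real.sqrt τ * |f τ| :=
      Frequently.of_forall (fun τ => mul_nonneg (Real.sqrt_nonneg _) (abs_nonneg _))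
    exact le_limsup_of_frequently_le hfreq hBdd
  have hI0 : 0 ≤ ∫ τ in Ioo (0:ℝ) T,
      Real.sqrt τ * |Real.log (τ / (Real.exp 1 * T))| ^ σ * |g τ| / τ := by
    apply setIntegral_nonneg measurableSet_Ioo
    intro τ hτ
    exact div_nonneg (mul_nonneg (mul_nonneg (Real.sqrt_nonneg _)
      (Real.rpow_nonneg (abs_nonneg _) _)) (abs_nonneg _)) hτ.1.le
  by_cases hmeas : AEStronglyMeasurable (fun t => Real.sqrt t *
      |Real.log (t / (Real.exp 1 * T))| ^ σ *
      (∫ τ in Ioo (t / 2) t, (t - τ) ^ (-(1 : ℝ) / 2) * |f τ| * |g τ|) / t)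
      (volume.restrict (Ioo (0:ℝ) T))
  swap
  · rw [integral_non_aestronglyMeasurable hmeas]
    have := mul_nonneg (mul_nonneg (by norm_num : (0:ℝ) ≤ 2) hA0) hI0
    linarith
  -- main case
  have hFnn : 0 ≤ᵐ[volume.restrict (Ioo (0:ℝ) T)] fun t => Real.sqrt t *
      |Real.log (t / (Real.exp 1 * T))| ^ σ *
      (∫ τ in Ioo (t / 2) t, (t - τ) ^ (-(1 : ℝ) / 2) * |f τ| * |g τ|) / t := by
    refine (ae_restrict_iff' measurableSet_Ioo).mpr (Eventually.of_forall fun t ht => ?_)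
    have hJ : 0 ≤ ∫ τ in Ioo (t / 2) t, (t - τ) ^ (-(1 : ℝ) / 2) * |f τ| * |g τ| :=
      setIntegral_nonneg measurableSet_Ioo fun τ _ => stuff_nn f g t τ
    exact div_nonneg (mul_nonneg (mul_nonneg (Real.sqrt_nonneg _)
      (Real.rpow_nonneg (abs_nonneg _) _)) hJ) ht.1.le
  rw [integral_eq_lintegral_of_nonneg_ae hFnn hmeas]
  have hchain : (∫⁻ t in Ioo (0:ℝ) T, ENNReal.ofReal (Real.sqrt t *
      |Real.log (t / (Real.exp 1 * T))| ^ σ *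
      (∫ τ in Ioo (t / 2) t, (t - τ) ^ (-(1 : ℝ) / 2) * |f τ| * |g τ|) / t))
      ≤ ENNReal.ofReal (2 * A) * ENNReal.ofReal (∫ τ in Ioo (0:ℝ) T,
        Real.sqrt τ * |Real.log (τ / (Real.exp 1 * T))| ^ σ * |g τ| / τ) := by
    calc (∫⁻ t in Ioo (0:ℝ) T, ENNReal.ofReal (Real.sqrt t *
        |Real.log (t / (Real.exp 1 * T))| ^ σ *
        (∫ τ in Ioo (t / 2) t, (t - τ) ^ (-(1 : ℝ) / 2) * |f τ| * |g τ|) / t))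
        ≤ ∫⁻ t in Ioo (0:ℝ) T, ∫⁻ τ, HH T σ f g t τ := by
          apply lintegral_mono_ae
          rw [ae_restrict_iff' measurableSet_Ioo]
          exact Eventually.of_forall fun t ht => sliceB T σ f g ht
      _ ≤ ∫⁻ t, ∫⁻ τ, HH T σ f g t τ := setLIntegral_le_lintegral _ _
      _ = ∫⁻ τ, ∫⁻ t, HH T σ f g t τ :=
          lintegral_lintegral_swap (HHmeas T σ f g hf hg).aemeasurable
      _ ≤ ∫⁻ τ, (Ioo (0:ℝ) T).indicator (fun τ => ENNReal.ofReal (2*A) *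
            ENNReal.ofReal (Real.sqrt τ * |Real.log (τ/(Real.exp 1*T))| ^ σ * |g τ| / τ)) τ := by
          apply lintegral_mono_ae
          have hgood : ∀ᵐ τ ∂(volume : Measure ℝ),
              τ ∈ Ioo (0:ℝ) T → Real.sqrt τ * |f τ| ≤ A :=
            (ae_restrict_iff' measurableSet_Ioo).mp hAe
          exact hgood.mono fun τ h => sliceC T σ hT hσ f g A hA0 h
      _ = ENNReal.ofReal (2 * A) * ∫⁻ τ in Ioo (0:ℝ) T,
            ENNReal.ofReal (Real.sqrt τ * |Real.log (τ/(Real.exp 1*T))| ^ σ * |g τ| / τ) := by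
          rw [lintegral_indicator measurableSet_Ioo]
          exact lintegral_const_mul' _ _ ENNReal.ofReal_ne_top
      _ = ENNReal.ofReal (2 * A) * ENNReal.ofReal (∫ τ in Ioo (0:ℝ) T,
            Real.sqrt τ * |Real.log (τ / (Real.exp 1 * T))| ^ σ * |g τ| / τ) := by
          congr 1
          rw [ofReal_integral_eq_lintegral_ofReal hint
            ((ae_restrict_iff' measurableSet_Ioo).mpr (Eventually.of_forall fun τ hτ =>
              div_nonneg (mul_nonneg (mul_nonneg (Real.sqrt_nonneg _)
                (Real.rpow_nonneg (abs_nonneg _) _)) (abs_nonneg _)) hτ.1.le))]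
  calc (∫⁻ t in Ioo (0:ℝ) T, ENNReal.ofReal (Real.sqrt t *
      |Real.log (t / (Real.exp 1 * T))| ^ σ *
      (∫ τ in Ioo (t / 2) t, (t - τ) ^ (-(1 : ℝ) / 2) * |f τ| * |g τ|) / t)).toReal
      ≤ (ENNReal.ofReal (2 * A) * ENNReal.ofReal (∫ τ in Ioo (0:ℝ) T,
        Real.sqrt τ * |Real.log (τ / (Real.exp 1 * T))| ^ σ * |g τ| / τ)).toReal :=
        ENNReal.toReal_mono (ENNReal.mul_ne_top ENNReal.ofReal_ne_top ENNReal.ofReal_ne_top)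
          hchain
    _ = 2 * A * ∫ τ in Ioo (0:ℝ) T,
        Real.sqrt τ * |Real.log (τ / (Real.exp 1 * T))| ^ σ * |g τ| / τ := by
        rw [ENNReal.toReal_mul, ENNReal.toReal_ofReal (by linarith),
          ENNReal.toReal_ofReal hI0]
end

section
/- Let T > 0, σ > 1, q ∈ [1,∞], and let f, g : (0,T) → ℝ be measurable. Define J(t) = √(2/t)·∫₀ᵗ |f(τ)||g(τ)| dτ for 0 < t < T. Then ‖√t·|ln(t/(eT))|^σ · J(t)‖_{L^q((0,T),dt/t)} ≤ C_{q,σ} · (sup_{0<τ<T} √τ |ln(τ/(eT))|^σ |f(τ)|) · ‖√τ·|ln(τ/(eT))|^σ·|g(τ)|‖_{L^q((0,T),dτ/τ)}. -/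
open MeasureTheory Set ENNReal

/-- The measure `dt/t` on `(0,T)`. -/
noncomputable def logMeasure (T : ℝ) : Measure ℝ :=
  (volume.restrict (Set.Ioo 0 T)).withDensity (fun t => ENNReal.ofReal t⁻¹)


private lemma expMap_image_Ioi (c a : ℝ) (hc : 0 < c) :
    (fun u : ℝ => c * Real.exp (-u)) '' Ioi a = Ioo 0 (c * Real.exp (-a)) := by
  ext x
  constructor
  · rintro ⟨u, hu, rfl⟩
    refine ⟨by positivity, ?_⟩
    have : Real.exp (-u) < Real.exp (-a) := Real.exp_lt_exp.2 (by simpa using hu)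
    exact mul_lt_mul_of_pos_left this hc
  · rintro ⟨hx0, hx1⟩
    refine ⟨Real.log (c / x), ?_, ?_⟩
    · rw [mem_Ioi, ← Real.log_exp a]
      apply Real.log_lt_log (Real.exp_pos a)
      rw [lt_div_iff₀ hx0]
      have h := (mul_lt_mul_iff_right₀ (Real.exp_pos a)).2 hx1
      calc Real.exp a * x < Real.exp a * (c * Real.exp (-a)) := h
        _ = c := by rw [Real.exp_neg]; field_simp
    · show c * Real.exp (-Real.log (c / x)) = x
      rw [Real.exp_neg, Real.exp_log (by positivity)]
      field_simp

private lemma expMap_image_Ioo (c a b : ℝ) (hc : 0 < c) :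
    (fun u : ℝ => c * Real.exp (-u)) '' Ioo a b = Ioo (c * Real.exp (-b)) (c * Real.exp (-a)) := by
  ext x
  constructor
  · rintro ⟨u, hu, rfl⟩
    exact ⟨mul_lt_mul_of_pos_left (Real.exp_lt_exp.2 (by simpa using hu.2)) hc,
      mul_lt_mul_of_pos_left (Real.exp_lt_exp.2 (by simpa using hu.1)) hc⟩
  · rintro ⟨hx0, hx1⟩
    have hx0' : 0 < x := lt_trans (by positivity) hx0
    refine ⟨Real.log (c / x), ⟨?_, ?_⟩, ?_⟩
    · rw [← Real.log_exp a]
      apply Real.log_lt_log (Real.exp_pos a)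
      rw [lt_div_iff₀ hx0']
      have h := (mul_lt_mul_iff_right₀ (Real.exp_pos a)).2 hx1
      calc Real.exp a * x < Real.exp a * (c * Real.exp (-a)) := h
        _ = c := by rw [Real.exp_neg]; field_simp
    · rw [← Real.log_exp b]
      apply Real.log_lt_log (by positivity)
      rw [div_lt_iff₀ hx0']
      have h := (mul_lt_mul_iff_right₀ (Real.exp_pos b)).2 hx0
      calc c = Real.exp b * (c * Real.exp (-b)) := by rw [Real.exp_neg]; field_simp
        _ < Real.exp b * x := h
    · show c * Real.exp (-Real.log (c / x)) = x
      rw [Real.exp_neg, Real.exp_log (by positivity)]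
      field_simp

private lemma lintegral_expMap (c : ℝ) (hc : 0 < c) {s : Set ℝ} (hs : MeasurableSet s)
    (g : ℝ → ℝ≥0∞) :
    ∫⁻ x in (fun u : ℝ => c * Real.exp (-u)) '' s, g x =
      ∫⁻ u in s, ENNReal.ofReal (c * Real.exp (-u)) * g (c * Real.exp (-u)) := by
  have hd : ∀ u ∈ s, HasFDerivWithinAt (fun u : ℝ => c * Real.exp (-u))
      ((1 : ℝ →L[ℝ] ℝ).smulRight (-(c * Real.exp (-u)))) s u := by
    intro u _
    have : HasDerivAt (fun u : ℝ => c * Real.exp (-u)) (-(c * Real.exp (-u))) u := by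
      have h1 : HasDerivAt (fun u : ℝ => Real.exp (-u)) (Real.exp (-u) * (-1)) u :=
        (Real.hasDerivAt_exp (-u)).comp u (hasDerivAt_neg u)
      have := h1.const_mul c
      exact this.congr_deriv (by ring)
    exact this.hasFDerivAt.hasFDerivWithinAt
  have hinj : InjOn (fun u : ℝ => c * Real.exp (-u)) s := by
    intro a _ b _ hab
    have : Real.exp (-a) = Real.exp (-b) := mul_left_cancel₀ hc.ne' hab
    have := Real.exp_injective this
    linarith [neg_injective this]
  have h := lintegral_image_eq_lintegral_abs_det_fderiv_mul volume hs hd hinj g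
  rw [h]
  apply setLIntegral_congr_fun hs
  intro u _; dsimp only
  rw [ContinuousLinearMap.det_smulRight, ContinuousLinearMap.one_apply, one_mul]
  congr 1
  rw [abs_neg, abs_of_pos (by positivity)]

private lemma cexp_log (c : ℝ) (hc : 0 < c) {t : ℝ} (ht : 0 < t) :
    c * Real.exp (-Real.log (c / t)) = t := by
  rw [Real.exp_neg, Real.exp_log (by positivity)]
  field_simp

private lemma lintegral_logweight (c : ℝ) (hc : 0 < c) {t r : ℝ} (ht : 0 < t)
    (ha : 0 < Real.log (c / t)) (hr : 1 < r) :
    ∫⁻ τ in Ioo 0 t, ENNReal.ofReal τ⁻¹ * ENNReal.ofReal (Real.log (c / τ) ^ (-r)) ∂volume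
      = ENNReal.ofReal (Real.log (c / t) ^ (1 - r) / (r - 1)) := by
  set a := Real.log (c / t) with hadef
  have himg : Ioo (0:ℝ) t = (fun u : ℝ => c * Real.exp (-u)) '' Ioi a := by
    rw [expMap_image_Ioi c a hc, cexp_log c hc ht]
  rw [himg, lintegral_expMap c hc measurableSet_Ioi]
  have hcong : ∫⁻ u in Ioi a, ENNReal.ofReal (c * Real.exp (-u)) *
      (ENNReal.ofReal (c * Real.exp (-u))⁻¹ * ENNReal.ofReal (Real.log (c / (c * Real.exp (-u))) ^ (-r)))
      = ∫⁻ u in Ioi a, ENNReal.ofReal (u ^ (-r)) := by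
    apply setLIntegral_congr_fun measurableSet_Ioi
    intro u hu; dsimp only
    have hpos : 0 < c * Real.exp (-u) := by positivity
    have hlog : Real.log (c / (c * Real.exp (-u))) = u := by
      rw [show c / (c * Real.exp (-u)) = Real.exp u by rw [Real.exp_neg]; field_simp]
      exact Real.log_exp u
    rw [hlog, ← mul_assoc, ← ENNReal.ofReal_mul hpos.le, mul_inv_cancel₀ hpos.ne',
      ENNReal.ofReal_one, one_mul]
  rw [hcong, ← ofReal_integral_eq_lintegral_ofReal
    (integrableOn_Ioi_rpow_of_lt (by linarith : -r < -1) ha)]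
  · rw [integral_Ioi_rpow_of_lt (by linarith : -r < -1) ha]
    congr 1
    rw [show -r + 1 = 1 - r by ring, show (1:ℝ) - r = -(r - 1) by ring, div_neg, neg_div, neg_neg]
  · filter_upwards [ae_restrict_mem measurableSet_Ioi] with u hu
    exact Real.rpow_nonneg (le_of_lt (lt_trans ha hu)) _

private lemma lintegral_logweight_sigma (c : ℝ) (hc : 0 < c) {τ σ : ℝ} (hτ : 0 < τ)
    (hβ : 1 ≤ Real.log (c / τ)) (hσ : 0 < σ) :
    ∫⁻ x in Ioo τ (c * Real.exp (-1)), ENNReal.ofReal x⁻¹ *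
        ENNReal.ofReal (Real.log (c / x) ^ σ) ∂volume
      ≤ ENNReal.ofReal (Real.log (c / τ) ^ (σ + 1) / (σ + 1)) := by
  set β := Real.log (c / τ) with hβdef
  have himg : Ioo τ (c * Real.exp (-1)) = (fun u : ℝ => c * Real.exp (-u)) '' Ioo 1 β := by
    rw [expMap_image_Ioo c 1 β hc, cexp_log c hc hτ]
  rw [himg, lintegral_expMap c hc measurableSet_Ioo]
  have hcong : ∫⁻ u in Ioo 1 β, ENNReal.ofReal (c * Real.exp (-u)) *
      (ENNReal.ofReal (c * Real.exp (-u))⁻¹ * ENNReal.ofReal (Real.log (c / (c * Real.exp (-u))) ^ σ))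
      = ∫⁻ u in Ioo 1 β, ENNReal.ofReal (u ^ σ) := by
    apply setLIntegral_congr_fun measurableSet_Ioo
    intro u hu; dsimp only
    have hpos : 0 < c * Real.exp (-u) := by positivity
    have hlog : Real.log (c / (c * Real.exp (-u))) = u := by
      rw [show c / (c * Real.exp (-u)) = Real.exp u by rw [Real.exp_neg]; field_simp]
      exact Real.log_exp u
    rw [hlog, ← mul_assoc, ← ENNReal.ofReal_mul hpos.le, mul_inv_cancel₀ hpos.ne',
      ENNReal.ofReal_one, one_mul]
  rw [hcong]
  have hint : IntegrableOn (fun u : ℝ => u ^ σ) (Ioo 1 β) := by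
    apply (ContinuousOn.integrableOn_Icc ?_).mono_set Ioo_subset_Icc_self
    exact continuousOn_id.rpow_const (fun x hx => Or.inl (by linarith [hx.1] : x ≠ 0))
  rw [← ofReal_integral_eq_lintegral_ofReal hint]
  · apply ENNReal.ofReal_le_ofReal
    rw [← integral_Ioc_eq_integral_Ioo, ← intervalIntegral.integral_of_le hβ,
      integral_rpow (Or.inl (by linarith : (-1:ℝ) < σ))]
    rw [Real.one_rpow]
    apply div_le_div_of_nonneg_right ?_ (by linarith)
    · linarith
  · filter_upwards [ae_restrict_mem measurableSet_Ioo] with u hu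
    exact Real.rpow_nonneg (by linarith [hu.1]) _

private lemma Real.ennnorm_eq_ofReal {r : ℝ} (hr : 0 ≤ r) :
    (‖r‖₊ : ℝ≥0∞) = ENNReal.ofReal r :=
  Real.enorm_eq_ofReal hr

private lemma meas_density : Measurable fun t : ℝ => ENNReal.ofReal t⁻¹ :=
  ENNReal.measurable_ofReal.comp measurable_inv

private lemma ae_logMeasure_iff {T : ℝ} {P : ℝ → Prop} :
    (∀ᵐ t ∂logMeasure T, P t) ↔ ∀ᵐ t ∂volume.restrict (Ioo 0 T), P t := by
  rw [logMeasure, ae_withDensity_iff meas_density]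
  constructor
  · intro h
    filter_upwards [h, ae_restrict_mem measurableSet_Ioo] with t h1 h2
    exact h1 (ENNReal.ofReal_pos.2 (inv_pos.2 h2.1)).ne'
  · intro h
    filter_upwards [h] with t h1 _
    exact h1

private lemma lintegral_logMeasure {T : ℝ} {φ : ℝ → ℝ≥0∞} (hφ : Measurable φ) :
    ∫⁻ t, φ t ∂logMeasure T = ∫⁻ t in Ioo 0 T, ENNReal.ofReal t⁻¹ * φ t ∂volume := by
  rw [logMeasure, lintegral_withDensity_eq_lintegral_mul _ meas_density hφ]
  rfl

private lemma meas_w (c σ : ℝ) {g : ℝ → ℝ} (hg : Measurable g) :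
    Measurable fun τ : ℝ => (‖Real.sqrt τ * |Real.log (τ / c)| ^ σ * g τ‖₊ : ℝ≥0∞) := by
  apply Measurable.coe_nnreal_ennreal
  apply Measurable.nnnorm
  exact ((Real.continuous_sqrt.measurable.mul
    (((Real.measurable_log.comp (measurable_id.div_const c)).abs).pow measurable_const)).mul hg)

private lemma meas_k (c r : ℝ) :
    Measurable fun τ : ℝ => ENNReal.ofReal (τ⁻¹ * Real.log (c / τ) ^ r) := by
  apply ENNReal.measurable_ofReal.comp
  exact measurable_inv.mul
    ((Real.measurable_log.comp (measurable_const.div measurable_id)).pow measurable_const)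

private lemma log_weight_facts {T : ℝ} (hT : 0 < T) {t : ℝ} (ht : t ∈ Ioo 0 T) :
    |Real.log (t / (Real.exp 1 * T))| = Real.log ((Real.exp 1 * T) / t) ∧
      1 ≤ Real.log ((Real.exp 1 * T) / t) := by
  have he := Real.exp_pos 1
  have h1 : Real.exp 1 ≤ (Real.exp 1 * T) / t := by
    rw [le_div_iff₀ ht.1]
    have : t < T := ht.2
    nlinarith
  have h2 : 1 ≤ Real.log ((Real.exp 1 * T) / t) := by
    calc (1:ℝ) = Real.log (Real.exp 1) := (Real.log_exp 1).symm
      _ ≤ _ := Real.log_le_log he h1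
  refine ⟨?_, h2⟩
  rw [show t / (Real.exp 1 * T) = ((Real.exp 1 * T) / t)⁻¹ by
    rw [inv_div], Real.log_inv, abs_neg, abs_of_nonneg (by linarith)]

private lemma pointwise_bound_s13 {σ : ℝ} (hσ : 1 < σ) {T : ℝ} (hT : 0 < T) (f g : ℝ → ℝ)
    {A : ℝ≥0∞}
    (hg : Measurable g)
    (hfb : ∀ᵐ τ ∂(volume.restrict (Ioo 0 T)),
      (‖Real.sqrt τ * |Real.log (τ / (Real.exp 1 * T))| ^ σ * f τ‖₊ : ℝ≥0∞) ≤ A)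
    {t : ℝ} (ht : t ∈ Ioo 0 T) :
    (‖Real.sqrt t * |Real.log (t / (Real.exp 1 * T))| ^ σ *
        (Real.sqrt (2 / t) * ∫ τ in Ioo 0 t, |f τ| * |g τ|)‖₊ : ℝ≥0∞)
      ≤ ENNReal.ofReal (Real.sqrt 2) * A *
        (ENNReal.ofReal (Real.log ((Real.exp 1 * T) / t) ^ σ) *
          ∫⁻ τ in Ioo 0 t,
            (‖Real.sqrt τ * |Real.log (τ / (Real.exp 1 * T))| ^ σ * g τ‖₊ : ℝ≥0∞) *
              ENNReal.ofReal (τ⁻¹ * Real.log ((Real.exp 1 * T) / τ) ^ (-(2 * σ))) ∂volume) := by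
  obtain ⟨habs, hL1⟩ := log_weight_facts hT ht
  set c := Real.exp 1 * T with hc
  have step1 : (‖Real.sqrt t * |Real.log (t / c)| ^ σ *
        (Real.sqrt (2 / t) * ∫ τ in Ioo 0 t, |f τ| * |g τ|)‖₊ : ℝ≥0∞)
      = ENNReal.ofReal (Real.sqrt 2) * ENNReal.ofReal (Real.log (c / t) ^ σ) *
        (‖∫ τ in Ioo 0 t, |f τ| * |g τ|‖₊ : ℝ≥0∞) := by
    rw [nnnorm_mul, nnnorm_mul, nnnorm_mul, ENNReal.coe_mul, ENNReal.coe_mul, ENNReal.coe_mul]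
    rw [Real.ennnorm_eq_ofReal (Real.sqrt_nonneg t),
      Real.ennnorm_eq_ofReal (by positivity : (0:ℝ) ≤ |Real.log (t / c)| ^ σ),
      Real.ennnorm_eq_ofReal (Real.sqrt_nonneg _), habs]
    have hsq : Real.sqrt t * Real.sqrt (2 / t) = Real.sqrt 2 := by
      rw [← Real.sqrt_mul ht.1.le]
      rw [mul_comm, div_mul_cancel₀ 2 (ne_of_gt ht.1)]
    calc ENNReal.ofReal (Real.sqrt t) * ENNReal.ofReal (Real.log (c / t) ^ σ) *
          (ENNReal.ofReal (Real.sqrt (2 / t)) * (‖∫ τ in Ioo 0 t, |f τ| * |g τ|‖₊ : ℝ≥0∞))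
        = ENNReal.ofReal (Real.sqrt t) * ENNReal.ofReal (Real.sqrt (2 / t)) *
          ENNReal.ofReal (Real.log (c / t) ^ σ) * (‖∫ τ in Ioo 0 t, |f τ| * |g τ|‖₊ : ℝ≥0∞) := by
          ring
      _ = _ := by rw [← ENNReal.ofReal_mul (Real.sqrt_nonneg t), hsq]
  rw [step1]
  have step2 : (‖∫ τ in Ioo 0 t, |f τ| * |g τ|‖₊ : ℝ≥0∞)
      ≤ ∫⁻ τ in Ioo 0 t, (‖f τ‖₊ : ℝ≥0∞) * (‖g τ‖₊ : ℝ≥0∞) ∂volume := by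
    refine le_trans (enorm_integral_le_lintegral_enorm _) (le_of_eq ?_)
    congr 1
    ext τ
    rw [enorm_eq_nnnorm, nnnorm_mul, ENNReal.coe_mul, Real.nnnorm_abs, Real.nnnorm_abs]
  have hfb' : ∀ᵐ τ ∂(volume.restrict (Ioo 0 t)),
      (‖Real.sqrt τ * |Real.log (τ / c)| ^ σ * f τ‖₊ : ℝ≥0∞) ≤ A :=
    ae_restrict_of_ae_restrict_of_subset (Ioo_subset_Ioo_right ht.2.le) hfb
  have step3 : ∫⁻ τ in Ioo 0 t, (‖f τ‖₊ : ℝ≥0∞) * (‖g τ‖₊ : ℝ≥0∞) ∂volume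
      ≤ A * ∫⁻ τ in Ioo 0 t,
          (‖Real.sqrt τ * |Real.log (τ / c)| ^ σ * g τ‖₊ : ℝ≥0∞) *
            ENNReal.ofReal (τ⁻¹ * Real.log (c / τ) ^ (-(2 * σ))) ∂volume := by
    rw [← lintegral_const_mul _ (f := fun τ =>
      (‖Real.sqrt τ * |Real.log (τ / c)| ^ σ * g τ‖₊ : ℝ≥0∞) *
        ENNReal.ofReal (τ⁻¹ * Real.log (c / τ) ^ (-(2 * σ)))) ((meas_w c σ hg).mul (meas_k c (-(2*σ))))]
    refine lintegral_mono_ae ?_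
    filter_upwards [hfb', ae_restrict_mem measurableSet_Ioo] with τ hfa hτ
    have hτT : τ ∈ Ioo 0 T := ⟨hτ.1, lt_trans hτ.2 ht.2⟩
    obtain ⟨habsτ, hL1τ⟩ := log_weight_facts hT hτT
    set L := Real.log (c / τ) with hLdef
    have hLpos : 0 < L := lt_of_lt_of_le one_pos hL1τ
    set w := Real.sqrt τ * |Real.log (τ / c)| ^ σ with hwdef
    have hwpos : 0 < w := mul_pos (Real.sqrt_pos.2 hτ.1)
      (by rw [habsτ]; exact Real.rpow_pos_of_pos hLpos σ)
    have hcoef : (‖w * f τ‖₊ : ℝ≥0∞) = ENNReal.ofReal w * ‖f τ‖₊ := by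
      rw [nnnorm_mul, ENNReal.coe_mul, Real.ennnorm_eq_ofReal hwpos.le]
    have hcoefg : (‖w * g τ‖₊ : ℝ≥0∞) = ENNReal.ofReal w * ‖g τ‖₊ := by
      rw [nnnorm_mul, ENNReal.coe_mul, Real.ennnorm_eq_ofReal hwpos.le]
    have hF2 : (‖f τ‖₊ : ℝ≥0∞) ≤ A / ENNReal.ofReal w := by
      rw [ENNReal.le_div_iff_mul_le (Or.inl ((ENNReal.ofReal_pos.2 hwpos).ne'))
        (Or.inl ENNReal.ofReal_ne_top), mul_comm ((‖f τ‖₊ : ℝ≥0∞)) _, ← hcoef]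
      exact hfa
    have hsqrt0 : Real.sqrt τ ≠ 0 := (Real.sqrt_pos.2 hτ.1).ne'
    have hLσ : L ^ σ ≠ 0 := (Real.rpow_pos_of_pos hLpos σ).ne'
    have hss : Real.sqrt τ * Real.sqrt τ = τ := Real.mul_self_sqrt hτ.1.le
    have h1 : (L ^ σ)⁻¹ * (L ^ σ)⁻¹ = L ^ (-(2 * σ)) := by
      rw [← Real.rpow_neg hLpos.le σ, ← Real.rpow_add hLpos]
      ring_nf
    have htauinv : τ⁻¹ = (Real.sqrt τ)⁻¹ * (Real.sqrt τ)⁻¹ := by rw [← mul_inv, hss]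
    have key : w * (τ⁻¹ * L ^ (-(2 * σ))) = w⁻¹ := by
      rw [hwdef, habsτ, mul_inv, htauinv, ← h1]
      field_simp
    calc (‖f τ‖₊ : ℝ≥0∞) * (‖g τ‖₊ : ℝ≥0∞)
        ≤ (A / ENNReal.ofReal w) * (‖g τ‖₊ : ℝ≥0∞) := mul_le_mul_left hF2 _
      _ = A * ((‖w * g τ‖₊ : ℝ≥0∞) * ENNReal.ofReal (τ⁻¹ * L ^ (-(2 * σ)))) := by
          rw [hcoefg, div_eq_mul_inv, ← ENNReal.ofReal_inv_of_pos hwpos, ← key,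
            ENNReal.ofReal_mul hwpos.le]
          ring
  calc ENNReal.ofReal (Real.sqrt 2) * ENNReal.ofReal (Real.log (c / t) ^ σ) *
        (‖∫ τ in Ioo 0 t, |f τ| * |g τ|‖₊ : ℝ≥0∞)
      ≤ ENNReal.ofReal (Real.sqrt 2) * ENNReal.ofReal (Real.log (c / t) ^ σ) *
        (A * ∫⁻ τ in Ioo 0 t,
          (‖Real.sqrt τ * |Real.log (τ / c)| ^ σ * g τ‖₊ : ℝ≥0∞) *
            ENNReal.ofReal (τ⁻¹ * Real.log (c / τ) ^ (-(2 * σ))) ∂volume) :=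
        mul_le_mul_right (step2.trans step3) _
    _ = _ := by ring

-- bound on the inner integral given an a.e. bound on the weighted g (used for q = ∞)
private lemma G_bound_top {σ : ℝ} (hσ : 1 < σ) {T : ℝ} (hT : 0 < T) (g : ℝ → ℝ)
    {B : ℝ≥0∞}
    (hgb : ∀ᵐ τ ∂(volume.restrict (Ioo 0 T)),
      (‖Real.sqrt τ * |Real.log (τ / (Real.exp 1 * T))| ^ σ * g τ‖₊ : ℝ≥0∞) ≤ B)
    {t : ℝ} (ht : t ∈ Ioo 0 T) :
    ENNReal.ofReal (Real.log ((Real.exp 1 * T) / t) ^ σ) *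
        ∫⁻ τ in Ioo 0 t,
          (‖Real.sqrt τ * |Real.log (τ / (Real.exp 1 * T))| ^ σ * g τ‖₊ : ℝ≥0∞) *
            ENNReal.ofReal (τ⁻¹ * Real.log ((Real.exp 1 * T) / τ) ^ (-(2 * σ))) ∂volume
      ≤ ENNReal.ofReal ((2 * σ - 1)⁻¹) * B := by
  set c := Real.exp 1 * T with hc
  have hcpos : 0 < c := by positivity
  obtain ⟨habs, hL1⟩ := log_weight_facts hT ht
  have hLpos : 0 < Real.log (c / t) := lt_of_lt_of_le one_pos hL1
  have hgb' := ae_restrict_of_ae_restrict_of_subset (Ioo_subset_Ioo_right ht.2.le) hgb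
  have hinner : ∫⁻ τ in Ioo 0 t,
      (‖Real.sqrt τ * |Real.log (τ / c)| ^ σ * g τ‖₊ : ℝ≥0∞) *
        ENNReal.ofReal (τ⁻¹ * Real.log (c / τ) ^ (-(2 * σ))) ∂volume
      ≤ B * ENNReal.ofReal (Real.log (c / t) ^ (1 - 2 * σ) / (2 * σ - 1)) := by
    have h1 : ∫⁻ τ in Ioo 0 t,
        (‖Real.sqrt τ * |Real.log (τ / c)| ^ σ * g τ‖₊ : ℝ≥0∞) *
          ENNReal.ofReal (τ⁻¹ * Real.log (c / τ) ^ (-(2 * σ))) ∂volume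
        ≤ ∫⁻ τ in Ioo 0 t,
            B * ENNReal.ofReal (τ⁻¹ * Real.log (c / τ) ^ (-(2 * σ))) ∂volume := by
      refine lintegral_mono_ae ?_
      filter_upwards [hgb'] with τ hτ
      exact mul_le_mul_left hτ _
    refine h1.trans (le_of_eq ?_)
    rw [lintegral_const_mul _ (meas_k c (-(2 * σ)))]
    congr 1
    have h2 : ∫⁻ τ in Ioo 0 t, ENNReal.ofReal (τ⁻¹ * Real.log (c / τ) ^ (-(2 * σ))) ∂volume
        = ∫⁻ τ in Ioo 0 t, ENNReal.ofReal τ⁻¹ *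
            ENNReal.ofReal (Real.log (c / τ) ^ (-(2 * σ))) ∂volume := by
      apply setLIntegral_congr_fun measurableSet_Ioo
      intro τ hτ; dsimp only
      rw [← ENNReal.ofReal_mul (inv_nonneg.2 hτ.1.le)]
    rw [h2, lintegral_logweight c hcpos ht.1 hLpos (by linarith : (1:ℝ) < 2 * σ)]
  calc ENNReal.ofReal (Real.log (c / t) ^ σ) * ∫⁻ τ in Ioo 0 t,
        (‖Real.sqrt τ * |Real.log (τ / c)| ^ σ * g τ‖₊ : ℝ≥0∞) *
          ENNReal.ofReal (τ⁻¹ * Real.log (c / τ) ^ (-(2 * σ))) ∂volume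
      ≤ ENNReal.ofReal (Real.log (c / t) ^ σ) *
        (B * ENNReal.ofReal (Real.log (c / t) ^ (1 - 2 * σ) / (2 * σ - 1))) :=
        mul_le_mul_right hinner _
    _ = B * ENNReal.ofReal (Real.log (c / t) ^ σ *
          (Real.log (c / t) ^ (1 - 2 * σ) / (2 * σ - 1))) := by
        rw [ENNReal.ofReal_mul (by positivity : (0:ℝ) ≤ Real.log (c / t) ^ σ)]
        ring
    _ ≤ ENNReal.ofReal ((2 * σ - 1)⁻¹) * B := by
        rw [mul_comm]
        apply mul_le_mul_left
        apply ENNReal.ofReal_le_ofReal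
        rw [mul_div_assoc', ← Real.rpow_add hLpos]
        have hle1 : Real.log (c / t) ^ (σ + (1 - 2 * σ)) ≤ 1 :=
          Real.rpow_le_one_of_one_le_of_nonpos hL1 (by linarith)
        rw [div_le_iff₀ (by linarith : (0:ℝ) < 2 * σ - 1)]
        calc Real.log (c / t) ^ (σ + (1 - 2 * σ)) ≤ 1 := hle1
          _ = (2 * σ - 1)⁻¹ * (2 * σ - 1) :=
            (inv_mul_cancel₀ (by linarith : (2 * σ - 1) ≠ 0)).symm

private lemma case_top {σ : ℝ} (hσ : 1 < σ) {T : ℝ} (hT : 0 < T) (f g : ℝ → ℝ)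
    (hg : Measurable g) :
    eLpNorm (fun t => Real.sqrt t * |Real.log (t / (Real.exp 1 * T))| ^ σ *
        (Real.sqrt (2 / t) * ∫ τ in Ioo 0 t, |f τ| * |g τ|)) ⊤ (logMeasure T)
      ≤ ENNReal.ofReal (Real.sqrt 2 * (2 * σ - 1)⁻¹) *
          eLpNorm (fun τ => Real.sqrt τ * |Real.log (τ / (Real.exp 1 * T))| ^ σ * f τ)
            ⊤ (logMeasure T) *
          eLpNorm (fun τ => Real.sqrt τ * |Real.log (τ / (Real.exp 1 * T))| ^ σ * g τ)
            ⊤ (logMeasure T) := by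
  set c := Real.exp 1 * T with hc
  set A := eLpNorm (fun τ => Real.sqrt τ * |Real.log (τ / c)| ^ σ * f τ) ⊤ (logMeasure T) with hA
  set B := eLpNorm (fun τ => Real.sqrt τ * |Real.log (τ / c)| ^ σ * g τ) ⊤ (logMeasure T) with hB
  have hfb : ∀ᵐ τ ∂volume.restrict (Ioo 0 T),
      (‖Real.sqrt τ * |Real.log (τ / c)| ^ σ * f τ‖₊ : ℝ≥0∞) ≤ A :=
    ae_logMeasure_iff.1 (by rw [hA, eLpNorm_exponent_top]; exact ae_le_eLpNormEssSup)
  have hgb : ∀ᵐ τ ∂volume.restrict (Ioo 0 T),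
      (‖Real.sqrt τ * |Real.log (τ / c)| ^ σ * g τ‖₊ : ℝ≥0∞) ≤ B :=
    ae_logMeasure_iff.1 (by rw [hB, eLpNorm_exponent_top]; exact ae_le_eLpNormEssSup)
  rw [eLpNorm_exponent_top]
  refine essSup_le_of_ae_le _ ?_
  refine ae_logMeasure_iff.2 ?_
  filter_upwards [ae_restrict_mem measurableSet_Ioo] with t ht
  calc (‖Real.sqrt t * |Real.log (t / c)| ^ σ *
          (Real.sqrt (2 / t) * ∫ τ in Ioo 0 t, |f τ| * |g τ|)‖₊ : ℝ≥0∞)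
      ≤ ENNReal.ofReal (Real.sqrt 2) * A *
        (ENNReal.ofReal (Real.log (c / t) ^ σ) *
          ∫⁻ τ in Ioo 0 t,
            (‖Real.sqrt τ * |Real.log (τ / c)| ^ σ * g τ‖₊ : ℝ≥0∞) *
              ENNReal.ofReal (τ⁻¹ * Real.log (c / τ) ^ (-(2 * σ))) ∂volume) :=
        pointwise_bound_s13 hσ hT f g hg hfb ht
    _ ≤ ENNReal.ofReal (Real.sqrt 2) * A * (ENNReal.ofReal ((2 * σ - 1)⁻¹) * B) :=
        mul_le_mul_right (G_bound_top hσ hT g hgb ht) _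
    _ = ENNReal.ofReal (Real.sqrt 2 * (2 * σ - 1)⁻¹) * A * B := by
        rw [ENNReal.ofReal_mul (Real.sqrt_nonneg 2)]
        ring

private lemma T_eq_cexp {T : ℝ} : Real.exp 1 * T * Real.exp (-1) = T := by
  rw [Real.exp_neg, mul_comm (Real.exp 1) T, mul_assoc, mul_inv_cancel₀ (Real.exp_pos 1).ne']
  ring

private lemma inner_t_integral {σ T : ℝ} (hσ : 1 < σ) (hT : 0 < T) {τ : ℝ}
    (hτ : τ ∈ Ioo 0 T) (hβ : 1 ≤ Real.log ((Real.exp 1 * T) / τ)) :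
    ∫⁻ t in Ioo 0 T, ENNReal.ofReal (t⁻¹ * Real.log ((Real.exp 1 * T) / t) ^ σ) *
        ({p : ℝ × ℝ | 0 < p.2 ∧ p.2 < p.1}.indicator 1 (t, τ)) ∂volume
      ≤ ENNReal.ofReal (Real.log ((Real.exp 1 * T) / τ) ^ (σ + 1) / (σ + 1)) := by
  set c := Real.exp 1 * T with hc
  have hcpos : 0 < c := by positivity
  have h1 : ∫⁻ t in Ioo 0 T, ENNReal.ofReal (t⁻¹ * Real.log (c / t) ^ σ) *
        ({p : ℝ × ℝ | 0 < p.2 ∧ p.2 < p.1}.indicator 1 (t, τ)) ∂volume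
      = ∫⁻ t in Ioo 0 T, (Ioi τ).indicator
          (fun t => ENNReal.ofReal (t⁻¹ * Real.log (c / t) ^ σ)) t ∂volume := by
    apply setLIntegral_congr_fun measurableSet_Ioo
    intro t ht; dsimp only
    by_cases hlt : τ < t
    · simp [Set.indicator_apply, hlt, hτ.1, mem_Ioi]
    · simp [Set.indicator_apply, hlt, mem_Ioi]
  rw [h1, lintegral_indicator measurableSet_Ioi, Measure.restrict_restrict measurableSet_Ioi]
  have h2 : Ioi τ ∩ Ioo 0 T = Ioo τ T := by
    ext x
    constructor
    · rintro ⟨hx1, hx2⟩; exact ⟨hx1, hx2.2⟩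
    · rintro ⟨hx1, hx2⟩; exact ⟨hx1, lt_trans hτ.1 hx1, hx2⟩
  rw [h2]
  have h3 : ∫⁻ t in Ioo τ T, ENNReal.ofReal (t⁻¹ * Real.log (c / t) ^ σ) ∂volume
      = ∫⁻ t in Ioo τ T, ENNReal.ofReal t⁻¹ * ENNReal.ofReal (Real.log (c / t) ^ σ) ∂volume := by
    apply setLIntegral_congr_fun measurableSet_Ioo
    intro t ht; dsimp only
    rw [← ENNReal.ofReal_mul (inv_nonneg.2 (le_of_lt (lt_trans hτ.1 ht.1)))]
  rw [h3]
  have hTc : T = c * Real.exp (-1) := by rw [hc, T_eq_cexp]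
  rw [hTc]
  exact lintegral_logweight_sigma c hcpos hτ.1 hβ (by linarith)

private lemma meas_logpow (c r : ℝ) :
    Measurable fun t : ℝ => ENNReal.ofReal (Real.log (c / t) ^ r) :=
  ENNReal.measurable_ofReal.comp
    ((Real.measurable_log.comp (measurable_const.div measurable_id)).pow measurable_const)

private lemma meas_G {c σ : ℝ} {h k : ℝ → ℝ≥0∞} :
    Measurable fun t : ℝ => ENNReal.ofReal (Real.log (c / t) ^ σ) *
      ∫⁻ τ in Ioo 0 t, h τ * k τ ∂volume := by
  apply (meas_logpow c σ).mul
  apply Monotone.measurable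
  intro a b hab
  exact lintegral_mono_set (Ioo_subset_Ioo_right hab)

-- the Schur / Tonelli bound for q = 1
private lemma tonelli_bound {σ : ℝ} (hσ : 1 < σ) {T : ℝ} (hT : 0 < T) {g : ℝ → ℝ}
    (hg : Measurable g) :
    ∫⁻ t, (ENNReal.ofReal (Real.log ((Real.exp 1 * T) / t) ^ σ) *
        ∫⁻ τ in Ioo 0 t,
          (‖Real.sqrt τ * |Real.log (τ / (Real.exp 1 * T))| ^ σ * g τ‖₊ : ℝ≥0∞) *
            ENNReal.ofReal (τ⁻¹ * Real.log ((Real.exp 1 * T) / τ) ^ (-(2 * σ))) ∂volume)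
        ∂(logMeasure T)
      ≤ ENNReal.ofReal ((σ + 1)⁻¹) *
          ∫⁻ τ, (‖Real.sqrt τ * |Real.log (τ / (Real.exp 1 * T))| ^ σ * g τ‖₊ : ℝ≥0∞)
            ∂(logMeasure T) := by
  set c := Real.exp 1 * T with hc
  have hcpos : 0 < c := by positivity
  set h : ℝ → ℝ≥0∞ := fun τ => (‖Real.sqrt τ * |Real.log (τ / c)| ^ σ * g τ‖₊ : ℝ≥0∞) with hh
  set k : ℝ → ℝ≥0∞ := fun τ => ENNReal.ofReal (τ⁻¹ * Real.log (c / τ) ^ (-(2 * σ))) with hk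
  set S : Set (ℝ × ℝ) := {p : ℝ × ℝ | 0 < p.2 ∧ p.2 < p.1} with hS
  have hSmeas : MeasurableSet S :=
    (measurableSet_lt measurable_const measurable_snd).inter
      (measurableSet_lt measurable_snd measurable_fst)
  have hhm : Measurable h := meas_w c σ hg
  have hkm : Measurable k := meas_k c (-(2 * σ))
  -- convert logMeasure lintegral to volume lintegral
  rw [lintegral_logMeasure meas_G, lintegral_logMeasure hhm]
  -- rewrite the lhs as a double integral with an indicator
  have step1 : ∫⁻ t in Ioo 0 T, ENNReal.ofReal t⁻¹ *
        (ENNReal.ofReal (Real.log (c / t) ^ σ) * ∫⁻ τ in Ioo 0 t, h τ * k τ ∂volume) ∂volume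
      = ∫⁻ t in Ioo 0 T, ∫⁻ τ in Ioo 0 T,
          ENNReal.ofReal (t⁻¹ * Real.log (c / t) ^ σ) * ((h τ * k τ) * S.indicator 1 (t, τ))
            ∂volume ∂volume := by
    apply setLIntegral_congr_fun measurableSet_Ioo
    intro t ht; dsimp only
    rw [lintegral_const_mul' _ _ ENNReal.ofReal_ne_top, ENNReal.ofReal_mul (inv_nonneg.2 ht.1.le)]
    rw [← mul_assoc]
    congr 1
    have : ∫⁻ τ in Ioo 0 T, (h τ * k τ) * S.indicator 1 (t, τ) ∂volume
        = ∫⁻ τ in Ioo 0 T, (Ioo 0 t).indicator (fun τ => h τ * k τ) τ ∂volume := by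
      apply setLIntegral_congr_fun measurableSet_Ioo
      intro τ hτ; dsimp only
      by_cases hlt : τ < t
      · simp [Set.indicator_apply, hlt, hτ.1, hS]
      · simp [Set.indicator_apply, hlt, hS]
    rw [this, lintegral_indicator measurableSet_Ioo,
      Measure.restrict_restrict measurableSet_Ioo,
      inter_eq_self_of_subset_left (Ioo_subset_Ioo_right ht.2.le)]
  rw [step1]
  -- swap the integrals (Tonelli)
  have hswap : ∫⁻ t in Ioo 0 T, ∫⁻ τ in Ioo 0 T,
        ENNReal.ofReal (t⁻¹ * Real.log (c / t) ^ σ) * ((h τ * k τ) * S.indicator 1 (t, τ))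
          ∂volume ∂volume
      = ∫⁻ τ in Ioo 0 T, ∫⁻ t in Ioo 0 T,
          ENNReal.ofReal (t⁻¹ * Real.log (c / t) ^ σ) * ((h τ * k τ) * S.indicator 1 (t, τ))
            ∂volume ∂volume := by
    apply lintegral_lintegral_swap
    apply AEMeasurable.mul
    · exact ((meas_k c σ).comp measurable_fst).aemeasurable
    · apply AEMeasurable.mul
      · exact ((hhm.mul hkm).comp measurable_snd).aemeasurable
      · exact (measurable_one.indicator hSmeas).aemeasurable
  rw [hswap]
  -- bound the inner integral
  have step2 : ∫⁻ τ in Ioo 0 T, ∫⁻ t in Ioo 0 T,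
        ENNReal.ofReal (t⁻¹ * Real.log (c / t) ^ σ) * ((h τ * k τ) * S.indicator 1 (t, τ))
          ∂volume ∂volume
      ≤ ∫⁻ τ in Ioo 0 T,
          (h τ * k τ) * ENNReal.ofReal (Real.log (c / τ) ^ (σ + 1) / (σ + 1)) ∂volume := by
    refine lintegral_mono_ae ?_
    filter_upwards [ae_restrict_mem measurableSet_Ioo] with τ hτ
    have hβ : 1 ≤ Real.log (c / τ) := (log_weight_facts hT hτ).2
    have heq : ∫⁻ t in Ioo 0 T,
          ENNReal.ofReal (t⁻¹ * Real.log (c / t) ^ σ) * ((h τ * k τ) * S.indicator 1 (t, τ))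
            ∂volume
        = (h τ * k τ) * ∫⁻ t in Ioo 0 T,
            ENNReal.ofReal (t⁻¹ * Real.log (c / t) ^ σ) * S.indicator 1 (t, τ) ∂volume := by
      rw [← lintegral_const_mul' _ _
        (ENNReal.mul_ne_top ENNReal.coe_ne_top ENNReal.ofReal_ne_top)]
      congr 1
      ext t
      ring
    rw [heq]
    exact mul_le_mul_right (inner_t_integral hσ hT hτ hβ) _
  refine step2.trans ?_
  -- final pointwise simplification
  have step3 : ∫⁻ τ in Ioo 0 T,
        (h τ * k τ) * ENNReal.ofReal (Real.log (c / τ) ^ (σ + 1) / (σ + 1)) ∂volume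
      ≤ ∫⁻ τ in Ioo 0 T,
          ENNReal.ofReal ((σ + 1)⁻¹) * (ENNReal.ofReal τ⁻¹ * h τ) ∂volume := by
    refine lintegral_mono_ae ?_
    filter_upwards [ae_restrict_mem measurableSet_Ioo] with τ hτ
    have hβ : 1 ≤ Real.log (c / τ) := (log_weight_facts hT hτ).2
    have hLpos : 0 < Real.log (c / τ) := lt_of_lt_of_le one_pos hβ
    have hcalc : k τ * ENNReal.ofReal (Real.log (c / τ) ^ (σ + 1) / (σ + 1))
        ≤ ENNReal.ofReal ((σ + 1)⁻¹) * ENNReal.ofReal τ⁻¹ := by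
      rw [hk, ← ENNReal.ofReal_mul
          (mul_nonneg (inv_nonneg.2 hτ.1.le) (Real.rpow_nonneg hLpos.le _)),
        ← ENNReal.ofReal_mul (inv_nonneg.2 (by linarith : (0:ℝ) ≤ σ + 1))]
      apply ENNReal.ofReal_le_ofReal
      have hexp : Real.log (c / τ) ^ (-(2 * σ)) * Real.log (c / τ) ^ (σ + 1)
          = Real.log (c / τ) ^ (1 - σ) := by
        rw [← Real.rpow_add hLpos]
        ring_nf
      have hle1 : Real.log (c / τ) ^ (1 - σ) ≤ 1 :=
        Real.rpow_le_one_of_one_le_of_nonpos hβ (by linarith)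
      calc τ⁻¹ * Real.log (c / τ) ^ (-(2 * σ)) * (Real.log (c / τ) ^ (σ + 1) / (σ + 1))
          = τ⁻¹ * (Real.log (c / τ) ^ (1 - σ)) * (σ + 1)⁻¹ := by
            rw [← hexp]; ring
        _ ≤ τ⁻¹ * 1 * (σ + 1)⁻¹ := by
            apply mul_le_mul_of_nonneg_right _ (by positivity)
            exact mul_le_mul_of_nonneg_left hle1 (inv_nonneg.2 hτ.1.le)
        _ = (σ + 1)⁻¹ * τ⁻¹ := by ring
    calc (h τ * k τ) * ENNReal.ofReal (Real.log (c / τ) ^ (σ + 1) / (σ + 1))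
        = h τ * (k τ * ENNReal.ofReal (Real.log (c / τ) ^ (σ + 1) / (σ + 1))) := by ring
      _ ≤ h τ * (ENNReal.ofReal ((σ + 1)⁻¹) * ENNReal.ofReal τ⁻¹) :=
          mul_le_mul_right hcalc _
      _ = ENNReal.ofReal ((σ + 1)⁻¹) * (ENNReal.ofReal τ⁻¹ * h τ) := by ring
  refine step3.trans (le_of_eq ?_)
  rw [lintegral_const_mul _ (f := fun τ => ENNReal.ofReal τ⁻¹ * h τ) (meas_density.mul hhm)]

private lemma case_one {σ : ℝ} (hσ : 1 < σ) {T : ℝ} (hT : 0 < T) (f g : ℝ → ℝ)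
    (hg : Measurable g) :
    eLpNorm (fun t => Real.sqrt t * |Real.log (t / (Real.exp 1 * T))| ^ σ *
        (Real.sqrt (2 / t) * ∫ τ in Ioo 0 t, |f τ| * |g τ|)) 1 (logMeasure T)
      ≤ ENNReal.ofReal (Real.sqrt 2 * (σ + 1)⁻¹) *
          eLpNorm (fun τ => Real.sqrt τ * |Real.log (τ / (Real.exp 1 * T))| ^ σ * f τ)
            ⊤ (logMeasure T) *
          eLpNorm (fun τ => Real.sqrt τ * |Real.log (τ / (Real.exp 1 * T))| ^ σ * g τ)
            1 (logMeasure T) := by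
  set c := Real.exp 1 * T with hc
  set A := eLpNorm (fun τ => Real.sqrt τ * |Real.log (τ / c)| ^ σ * f τ) ⊤ (logMeasure T) with hA
  have hfb : ∀ᵐ τ ∂volume.restrict (Ioo 0 T),
      (‖Real.sqrt τ * |Real.log (τ / c)| ^ σ * f τ‖₊ : ℝ≥0∞) ≤ A :=
    ae_logMeasure_iff.1 (by rw [hA, eLpNorm_exponent_top]; exact ae_le_eLpNormEssSup)
  rw [eLpNorm_one_eq_lintegral_enorm, eLpNorm_one_eq_lintegral_enorm]
  calc ∫⁻ t, (‖Real.sqrt t * |Real.log (t / c)| ^ σ *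
          (Real.sqrt (2 / t) * ∫ τ in Ioo 0 t, |f τ| * |g τ|)‖₊ : ℝ≥0∞) ∂(logMeasure T)
      ≤ ∫⁻ t, ENNReal.ofReal (Real.sqrt 2) * A *
          (ENNReal.ofReal (Real.log (c / t) ^ σ) *
            ∫⁻ τ in Ioo 0 t,
              (‖Real.sqrt τ * |Real.log (τ / c)| ^ σ * g τ‖₊ : ℝ≥0∞) *
                ENNReal.ofReal (τ⁻¹ * Real.log (c / τ) ^ (-(2 * σ))) ∂volume) ∂(logMeasure T) := by
        refine lintegral_mono_ae ?_
        refine ae_logMeasure_iff.2 ?_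
        filter_upwards [ae_restrict_mem measurableSet_Ioo] with t ht
        exact pointwise_bound_s13 hσ hT f g hg hfb ht
    _ = ENNReal.ofReal (Real.sqrt 2) * A *
        ∫⁻ t, (ENNReal.ofReal (Real.log (c / t) ^ σ) *
            ∫⁻ τ in Ioo 0 t,
              (‖Real.sqrt τ * |Real.log (τ / c)| ^ σ * g τ‖₊ : ℝ≥0∞) *
                ENNReal.ofReal (τ⁻¹ * Real.log (c / τ) ^ (-(2 * σ))) ∂volume) ∂(logMeasure T) :=
        lintegral_const_mul _ meas_G
    _ ≤ ENNReal.ofReal (Real.sqrt 2) * A *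
        (ENNReal.ofReal ((σ + 1)⁻¹) *
          ∫⁻ τ, (‖Real.sqrt τ * |Real.log (τ / c)| ^ σ * g τ‖₊ : ℝ≥0∞) ∂(logMeasure T)) :=
        mul_le_mul_right (tonelli_bound hσ hT hg) _
    _ = ENNReal.ofReal (Real.sqrt 2 * (σ + 1)⁻¹) * A *
        ∫⁻ τ, (‖Real.sqrt τ * |Real.log (τ / c)| ^ σ * g τ‖₊ : ℝ≥0∞) ∂(logMeasure T) := by
        rw [ENNReal.ofReal_mul (Real.sqrt_nonneg 2)]
        ring

private lemma G_bound_p {σ : ℝ} (hσ : 1 < σ) {T : ℝ} (hT : 0 < T) {g : ℝ → ℝ}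
    (hg : Measurable g) {p : ℝ} (hp : 1 < p) {t : ℝ} (ht : t ∈ Ioo 0 T) :
    ENNReal.ofReal (Real.log ((Real.exp 1 * T) / t) ^ σ) *
        ∫⁻ τ in Ioo 0 t,
          (‖Real.sqrt τ * |Real.log (τ / (Real.exp 1 * T))| ^ σ * g τ‖₊ : ℝ≥0∞) *
            ENNReal.ofReal (τ⁻¹ * Real.log ((Real.exp 1 * T) / τ) ^ (-(2 * σ))) ∂volume
      ≤ ENNReal.ofReal (Real.log ((Real.exp 1 * T) / t) ^ (-(σ - 1 + 1 / p))) *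
        (∫⁻ τ, (‖Real.sqrt τ * |Real.log (τ / (Real.exp 1 * T))| ^ σ * g τ‖₊ : ℝ≥0∞) ^ p
          ∂(logMeasure T)) ^ (1 / p) := by
  set c := Real.exp 1 * T with hc
  have hcpos : 0 < c := by positivity
  set h : ℝ → ℝ≥0∞ := fun τ => (‖Real.sqrt τ * |Real.log (τ / c)| ^ σ * g τ‖₊ : ℝ≥0∞) with hh
  have hhm : Measurable h := meas_w c σ hg
  obtain ⟨habs, hL1⟩ := log_weight_facts hT ht
  have hLpos : 0 < Real.log (c / t) := lt_of_lt_of_le one_pos hL1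
  have hpq := Real.HolderConjugate.conjExponent hp
  set p' := Real.conjExponent p with hp'def
  have hp'1 : 1 < p' := hpq.symm.lt
  have hp'pos : 0 < p' := by linarith
  have hppos : 0 < p := by linarith
  -- rewrite the inner integral over logMeasure t
  have hI : ∫⁻ τ in Ioo 0 t, h τ *
        ENNReal.ofReal (τ⁻¹ * Real.log (c / τ) ^ (-(2 * σ))) ∂volume
      = ∫⁻ τ, h τ * ENNReal.ofReal (Real.log (c / τ) ^ (-(2 * σ)))
          ∂(logMeasure t) := by
    rw [lintegral_logMeasure (φ := fun τ => h τ * ENNReal.ofReal (Real.log (c / τ) ^ (-(2 * σ))))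
      (hhm.mul (meas_logpow c (-(2 * σ))))]
    apply setLIntegral_congr_fun measurableSet_Ioo
    intro τ hτ; dsimp only
    rw [ENNReal.ofReal_mul (inv_nonneg.2 hτ.1.le)]
    ring
  rw [hI]
  -- Hölder
  have hH := ENNReal.lintegral_mul_le_Lp_mul_Lq (logMeasure t) hpq hhm.aemeasurable
    (meas_logpow c (-(2 * σ))).aemeasurable
  simp only [Pi.mul_apply] at hH
  refine le_trans (mul_le_mul_right hH _) ?_
  -- term 1
  have hterm1 : (∫⁻ τ, h τ ^ p ∂(logMeasure t)) ^ (1 / p)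
      ≤ (∫⁻ τ, h τ ^ p ∂(logMeasure T)) ^ (1 / p) := by
    apply ENNReal.rpow_le_rpow _ (by positivity)
    rw [lintegral_logMeasure (hhm.pow measurable_const),
      lintegral_logMeasure (hhm.pow measurable_const)]
    exact lintegral_mono_set (Ioo_subset_Ioo_right ht.2.le)
  -- term 2
  have hterm2 : (∫⁻ τ, (ENNReal.ofReal (Real.log (c / τ) ^ (-(2 * σ)))) ^ p'
        ∂(logMeasure t)) ^ (1 / p')
      ≤ ENNReal.ofReal (Real.log (c / t) ^ ((1 - 2 * σ * p') / p')) := by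
    have h2 : ∫⁻ τ, (ENNReal.ofReal (Real.log (c / τ) ^ (-(2 * σ)))) ^ p' ∂(logMeasure t)
        = ENNReal.ofReal (Real.log (c / t) ^ (1 - 2 * σ * p') / (2 * σ * p' - 1)) := by
      rw [lintegral_logMeasure ((meas_logpow c (-(2 * σ))).pow measurable_const)]
      have hcong : ∫⁻ τ in Ioo 0 t, ENNReal.ofReal τ⁻¹ *
            (ENNReal.ofReal (Real.log (c / τ) ^ (-(2 * σ)))) ^ p' ∂volume
          = ∫⁻ τ in Ioo 0 t, ENNReal.ofReal τ⁻¹ *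
              ENNReal.ofReal (Real.log (c / τ) ^ (-(2 * σ * p'))) ∂volume := by
        apply setLIntegral_congr_fun measurableSet_Ioo
        intro τ hτ; dsimp only
        have hτT : τ ∈ Ioo 0 T := ⟨hτ.1, lt_trans hτ.2 ht.2⟩
        have hLτ : 0 < Real.log (c / τ) := lt_of_lt_of_le one_pos (log_weight_facts hT hτT).2
        congr 1
        rw [ENNReal.ofReal_rpow_of_pos (Real.rpow_pos_of_pos hLτ _)]
        congr 1
        rw [show -(2 * σ * p') = (-(2 * σ)) * p' by ring, Real.rpow_mul hLτ.le]
      rw [hcong, lintegral_logweight c hcpos ht.1 hLpos (by nlinarith : (1:ℝ) < 2 * σ * p')]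
    have hXnn : 0 ≤ Real.log (c / t) ^ (1 - 2 * σ * p') / (2 * σ * p' - 1) :=
      div_nonneg (Real.rpow_nonneg hLpos.le _) (by nlinarith)
    rw [h2, ENNReal.ofReal_rpow_of_nonneg hXnn (by positivity)]
    apply ENNReal.ofReal_le_ofReal
    calc (Real.log (c / t) ^ (1 - 2 * σ * p') / (2 * σ * p' - 1)) ^ (1 / p')
        ≤ (Real.log (c / t) ^ (1 - 2 * σ * p')) ^ (1 / p') :=
          Real.rpow_le_rpow hXnn
            (div_le_self (Real.rpow_nonneg hLpos.le _) (by nlinarith)) (by positivity)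
      _ = Real.log (c / t) ^ ((1 - 2 * σ * p') / p') := by
          rw [← Real.rpow_mul hLpos.le, mul_one_div]
  -- assemble
  calc ENNReal.ofReal (Real.log (c / t) ^ σ) *
        ((∫⁻ τ, h τ ^ p ∂(logMeasure t)) ^ (1 / p) *
          (∫⁻ τ, (ENNReal.ofReal (Real.log (c / τ) ^ (-(2 * σ)))) ^ p'
            ∂(logMeasure t)) ^ (1 / p'))
      ≤ ENNReal.ofReal (Real.log (c / t) ^ σ) *
        ((∫⁻ τ, h τ ^ p ∂(logMeasure T)) ^ (1 / p) *
          ENNReal.ofReal (Real.log (c / t) ^ ((1 - 2 * σ * p') / p'))) :=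
        mul_le_mul_right (mul_le_mul' hterm1 hterm2) _
    _ = ENNReal.ofReal (Real.log (c / t) ^ (-(σ - 1 + 1 / p))) *
        (∫⁻ τ, h τ ^ p ∂(logMeasure T)) ^ (1 / p) := by
        rw [show ENNReal.ofReal (Real.log (c / t) ^ σ) *
            ((∫⁻ τ, h τ ^ p ∂(logMeasure T)) ^ (1 / p) *
              ENNReal.ofReal (Real.log (c / t) ^ ((1 - 2 * σ * p') / p')))
          = ENNReal.ofReal (Real.log (c / t) ^ σ) *
              ENNReal.ofReal (Real.log (c / t) ^ ((1 - 2 * σ * p') / p')) *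
              (∫⁻ τ, h τ ^ p ∂(logMeasure T)) ^ (1 / p) by ring]
        congr 1
        rw [← ENNReal.ofReal_mul (Real.rpow_nonneg hLpos.le _), ← Real.rpow_add hLpos]
        congr 1
        have hinv : p'⁻¹ = 1 - p⁻¹ := by
          have := hpq.inv_add_inv_eq_one
          linarith
        have hfrac : (1 - 2 * σ * p') / p' = p'⁻¹ - 2 * σ := by
          field_simp
        rw [hfrac, hinv, one_div]
        ring

private lemma case_p {σ : ℝ} (hσ : 1 < σ) {T : ℝ} (hT : 0 < T) (f g : ℝ → ℝ)
    (hg : Measurable g) {q : ℝ≥0∞} (hq1 : 1 < q) (hqt : q ≠ ⊤) :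
    eLpNorm (fun t => Real.sqrt t * |Real.log (t / (Real.exp 1 * T))| ^ σ *
        (Real.sqrt (2 / t) * ∫ τ in Ioo 0 t, |f τ| * |g τ|)) q (logMeasure T)
      ≤ ENNReal.ofReal (Real.sqrt 2 * ((q.toReal * (σ - 1))⁻¹ ^ (1 / q.toReal))) *
          eLpNorm (fun τ => Real.sqrt τ * |Real.log (τ / (Real.exp 1 * T))| ^ σ * f τ)
            ⊤ (logMeasure T) *
          eLpNorm (fun τ => Real.sqrt τ * |Real.log (τ / (Real.exp 1 * T))| ^ σ * g τ)
            q (logMeasure T) := by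
  set c := Real.exp 1 * T with hc
  have hcpos : 0 < c := by positivity
  set p := q.toReal with hpdef
  have hp : 1 < p := by
    rw [hpdef, ← ENNReal.toReal_one]
    exact (ENNReal.toReal_lt_toReal ENNReal.one_ne_top hqt).2 hq1
  have hppos : 0 < p := by linarith
  set a : ℝ := σ - 1 + 1 / p with hadef
  have hapos : 0 < a := by
    have h1 : 0 < 1 / p := by positivity
    rw [hadef]; linarith
  set A := eLpNorm (fun τ => Real.sqrt τ * |Real.log (τ / c)| ^ σ * f τ) ⊤ (logMeasure T) with hA
  have hfb : ∀ᵐ τ ∂volume.restrict (Ioo 0 T),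
      (‖Real.sqrt τ * |Real.log (τ / c)| ^ σ * f τ‖₊ : ℝ≥0∞) ≤ A :=
    ae_logMeasure_iff.1 (by rw [hA, eLpNorm_exponent_top]; exact ae_le_eLpNormEssSup)
  set h : ℝ → ℝ≥0∞ := fun τ => (‖Real.sqrt τ * |Real.log (τ / c)| ^ σ * g τ‖₊ : ℝ≥0∞) with hh
  have hhm : Measurable h := meas_w c σ hg
  set Bp := (∫⁻ τ, h τ ^ p ∂(logMeasure T)) ^ (1 / p) with hBp
  have hBeq : eLpNorm (fun τ => Real.sqrt τ * |Real.log (τ / c)| ^ σ * g τ) q (logMeasure T)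
      = Bp := by
    rw [eLpNorm_eq_lintegral_rpow_enorm_toReal (by exact (lt_trans zero_lt_one hq1).ne') hqt]
    rfl
  rw [eLpNorm_eq_lintegral_rpow_enorm_toReal (by exact (lt_trans zero_lt_one hq1).ne') hqt, hBeq]
  set C0 := ENNReal.ofReal (Real.sqrt 2) * A * Bp with hC0
  -- a.e. pointwise bound
  have hae : ∀ᵐ t ∂(logMeasure T),
      (‖Real.sqrt t * |Real.log (t / c)| ^ σ *
          (Real.sqrt (2 / t) * ∫ τ in Ioo 0 t, |f τ| * |g τ|)‖₊ : ℝ≥0∞) ^ p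
        ≤ C0 ^ p * (ENNReal.ofReal (Real.log (c / t) ^ (-a))) ^ p := by
    refine ae_logMeasure_iff.2 ?_
    filter_upwards [ae_restrict_mem measurableSet_Ioo] with t ht
    rw [← ENNReal.mul_rpow_of_nonneg _ _ hppos.le]
    apply ENNReal.rpow_le_rpow _ hppos.le
    calc (‖Real.sqrt t * |Real.log (t / c)| ^ σ *
            (Real.sqrt (2 / t) * ∫ τ in Ioo 0 t, |f τ| * |g τ|)‖₊ : ℝ≥0∞)
        ≤ ENNReal.ofReal (Real.sqrt 2) * A *
          (ENNReal.ofReal (Real.log (c / t) ^ σ) *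
            ∫⁻ τ in Ioo 0 t, h τ *
              ENNReal.ofReal (τ⁻¹ * Real.log (c / τ) ^ (-(2 * σ))) ∂volume) :=
          pointwise_bound_s13 hσ hT f g hg hfb ht
      _ ≤ ENNReal.ofReal (Real.sqrt 2) * A *
          (ENNReal.ofReal (Real.log (c / t) ^ (-a)) * Bp) :=
          mul_le_mul_right (G_bound_p hσ hT hg hp ht) _
      _ = C0 * ENNReal.ofReal (Real.log (c / t) ^ (-a)) := by rw [hC0]; ring
  -- integrate
  have hint : ∫⁻ t, (‖Real.sqrt t * |Real.log (t / c)| ^ σ *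
        (Real.sqrt (2 / t) * ∫ τ in Ioo 0 t, |f τ| * |g τ|)‖₊ : ℝ≥0∞) ^ p ∂(logMeasure T)
      ≤ C0 ^ p * ENNReal.ofReal ((p * (σ - 1))⁻¹) := by
    refine le_trans (lintegral_mono_ae hae) ?_
    rw [lintegral_const_mul _ ((meas_logpow c (-a)).pow measurable_const)]
    apply mul_le_mul_right
    -- compute the weight integral
    have hcT : Real.log (c / T) = 1 := by
      rw [show c / T = Real.exp 1 by rw [hc]; field_simp]
      exact Real.log_exp 1
    have hr : 1 < a * p := by
      rw [hadef]
      have : (σ - 1 + 1 / p) * p = (σ - 1) * p + 1 := by field_simp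
      rw [this]
      nlinarith
    have hcong : ∫⁻ t, (ENNReal.ofReal (Real.log (c / t) ^ (-a))) ^ p ∂(logMeasure T)
        = ∫⁻ t in Ioo 0 T, ENNReal.ofReal t⁻¹ *
            ENNReal.ofReal (Real.log (c / t) ^ (-(a * p))) ∂volume := by
      rw [lintegral_logMeasure ((meas_logpow c (-a)).pow measurable_const)]
      apply setLIntegral_congr_fun measurableSet_Ioo
      intro t ht; dsimp only
      congr 1
      have hLpos : 0 < Real.log (c / t) :=
        lt_of_lt_of_le one_pos (log_weight_facts hT ht).2
      rw [ENNReal.ofReal_rpow_of_pos (Real.rpow_pos_of_pos hLpos _)]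
      congr 1
      rw [show -(a * p) = (-a) * p by ring, Real.rpow_mul hLpos.le]
    rw [hcong, lintegral_logweight c hcpos hT (by rw [hcT]; norm_num) hr, hcT, Real.one_rpow]
    apply ENNReal.ofReal_le_ofReal
    rw [one_div]
    apply inv_anti₀ (by nlinarith)
    rw [hadef]
    have : (σ - 1 + 1 / p) * p = (σ - 1) * p + 1 := by field_simp
    rw [this]
    nlinarith
  calc (∫⁻ t, (‖Real.sqrt t * |Real.log (t / c)| ^ σ *
        (Real.sqrt (2 / t) * ∫ τ in Ioo 0 t, |f τ| * |g τ|)‖₊ : ℝ≥0∞) ^ p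
          ∂(logMeasure T)) ^ (1 / p)
      ≤ (C0 ^ p * ENNReal.ofReal ((p * (σ - 1))⁻¹)) ^ (1 / p) :=
        ENNReal.rpow_le_rpow hint (by positivity)
    _ = C0 * ENNReal.ofReal (((p * (σ - 1))⁻¹) ^ (1 / p)) := by
        rw [ENNReal.mul_rpow_of_nonneg _ _ (by positivity : (0:ℝ) ≤ 1 / p),
          ← ENNReal.rpow_mul, mul_one_div, div_self hppos.ne', ENNReal.rpow_one,
          ENNReal.ofReal_rpow_of_nonneg (inv_nonneg.2 (by nlinarith)) (by positivity)]
    _ = ENNReal.ofReal (Real.sqrt 2 * ((p * (σ - 1))⁻¹ ^ (1 / p))) * A * Bp := by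
        rw [hC0, ENNReal.ofReal_mul (Real.sqrt_nonneg 2)]
        ring


theorem stmt_13 (σ : ℝ) (hσ : 1 < σ) (q : ℝ≥0∞) (hq : 1 ≤ q) :
    ∃ C : ℝ, 0 < C ∧ ∀ T : ℝ, 0 < T → ∀ f g : ℝ → ℝ, Measurable f → Measurable g →
      eLpNorm (fun t => Real.sqrt t * |Real.log (t / (Real.exp 1 * T))| ^ σ *
          (Real.sqrt (2 / t) * ∫ τ in Ioo 0 t, |f τ| * |g τ|)) q (logMeasure T)
        ≤ ENNReal.ofReal C *
            eLpNorm (fun τ => Real.sqrt τ * |Real.log (τ / (Real.exp 1 * T))| ^ σ * f τ)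
              ⊤ (logMeasure T) *
            eLpNorm (fun τ => Real.sqrt τ * |Real.log (τ / (Real.exp 1 * T))| ^ σ * g τ)
              q (logMeasure T) := by
  rcases eq_or_ne q ⊤ with rfl | hqt
  · refine ⟨Real.sqrt 2 * (2 * σ - 1)⁻¹,
      mul_pos (Real.sqrt_pos.2 (by norm_num)) (inv_pos.2 (by linarith)), ?_⟩
    intro T hT f g hf hg
    exact case_top hσ hT f g hg
  · rcases hq.lt_or_eq with hq1 | hq1
    · refine ⟨Real.sqrt 2 * ((q.toReal * (σ - 1))⁻¹ ^ (1 / q.toReal)), ?_, ?_⟩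
      · have hp : 1 < q.toReal := by
          rw [← ENNReal.toReal_one]
          exact (ENNReal.toReal_lt_toReal ENNReal.one_ne_top hqt).2 hq1
        have h1 : 0 < (q.toReal * (σ - 1))⁻¹ := inv_pos.2 (by nlinarith)
        exact mul_pos (Real.sqrt_pos.2 (by norm_num)) (Real.rpow_pos_of_pos h1 _)
      · intro T hT f g hf hg
        exact case_p hσ hT f g hg hq1 hqt
    · refine ⟨Real.sqrt 2 * (σ + 1)⁻¹,
        mul_pos (Real.sqrt_pos.2 (by norm_num)) (inv_pos.2 (by linarith)), ?_⟩
      intro T hT f g hf hg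
      rw [← hq1]
      exact case_one hσ hT f g hg
end
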